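/- arXiv:2407.09824 — 4 statements merged into one kernel-verified Lean document; each statement's English description precedes it below -/
import Mathlib

section
/- For any finite group G and any irreducible complex representation ρ of G, the sum over all conjugacy classes C of G of the character values χ^ρ(C) is a nonnegative integer. -/
open Representation Finset CategoryTheory.MonoidalCategory

/-- The conjugation (permutation) representation of `G` on `ℂ[G]`. -/
noncomputable def conjRep (G : Type) [Group G] [Fintype G] : FDRep ℂ G :=
  FDRep.of ((Representation.ofMulAction ℂ (ConjAct G) G).comp
    (ConjAct.toConjAct : G ≃* ConjAct G).toMonoidHom)

lemma conjRep_char' (G : Type) [Group G] [Fintype G] (g : G) [DecidableEq G] :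
    (conjRep G).character g =
      ((Finset.univ.filter fun x : G => x * g * x⁻¹ = g).card : ℂ) := by
  classical
  show LinearMap.trace ℂ (MonoidAlgebra ℂ G)
      (Representation.ofMulAction ℂ (ConjAct G) G (ConjAct.toConjAct g)) = _
  rw [LinearMap.trace_eq_matrix_trace ℂ (MonoidAlgebra.basis G ℂ), Matrix.trace]
  rw [Finset.card_filter, Nat.cast_sum]
  apply Finset.sum_congr rfl
  intro x _
  rw [Matrix.diag_apply, LinearMap.toMatrix_apply]
  simp only [MonoidAlgebra.basis_apply]
  rw [Representation.ofMulAction_single]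
  change (MonoidAlgebra.single _ (1:ℂ)).coeff x = _
  rw [MonoidAlgebra.coeff_single, Finsupp.single_apply]
  have h1 : ConjAct.toConjAct g • x = g * x * g⁻¹ := by simp [ConjAct.toConjAct_smul]
  rw [h1]
  have h2 : (g * x * g⁻¹ = x) ↔ (x * g * x⁻¹ = g) := by
    rw [mul_inv_eq_iff_eq_mul, mul_inv_eq_iff_eq_mul]
    exact eq_comm
  rw [show (if g * x * g⁻¹ = x then (1:ℂ) else 0) = (if x * g * x⁻¹ = g then (1:ℂ) else 0) by
    simp [h2]]
  split <;> simp_all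

lemma card_commuting (G : Type) [Group G] [Fintype G] (g : G) [DecidableEq G] :
    (Finset.univ.filter fun x : G => x * g * x⁻¹ = g).card =
      Fintype.card (MulAction.stabilizer (ConjAct G) g) := by
  classical
  rw [← Fintype.card_subtype]
  apply Fintype.card_congr
  apply Equiv.subtypeEquiv (ConjAct.toConjAct : G ≃* ConjAct G).toEquiv
  intro x
  simp [MulAction.mem_stabilizer_iff, ConjAct.toConjAct_smul]

lemma conjRep_char (G : Type) [Group G] [Fintype G] (g : G) :
    (conjRep G).character g =
      (Nat.card (MulAction.stabilizer (ConjAct G) g) : ℂ) := by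
  classical
  rw [conjRep_char']
  exact congrArg (Nat.cast : ℕ → ℂ)
    ((card_commuting G g).trans Nat.card_eq_fintype_card.symm)

lemma fiber_card_eq_orbit_card (G : Type) [Group G] [Fintype G] [DecidableEq G]
    (C : ConjClasses G) (g : G) (hg : ConjClasses.mk g = C)
    :
    (univ.filter fun h : G => ConjClasses.mk h = C).card
      = Nat.card (MulAction.orbit (ConjAct G) g) := by
  classical
  rw [Nat.card_eq_fintype_card, ← Fintype.card_subtype]
  apply Fintype.card_congr
  apply (Equiv.setCongr ?_).symm
  rw [ConjAct.orbit_eq_carrier_conjClasses, hg]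
  ext h
  simp only [ConjClasses.mem_carrier_iff_mk_eq]
  rfl

lemma char_eq_out (G : Type) [Group G] [Fintype G] (V : FDRep ℂ G)
    (C : ConjClasses G) (g : G) (hg : ConjClasses.mk g = C) :
    V.character g = V.character (Quotient.out C) := by
  have h : IsConj (Quotient.out C) g := by
    rw [← ConjClasses.mk_eq_mk_iff_isConj, hg]
    exact Quotient.out_eq C
  obtain ⟨c, hc⟩ := isConj_iff.mp h
  rw [← hc, FDRep.char_conj]

/-- For any finite group `G` and any irreducible complex representation `V` of `G`,
the sum over all conjugacy classes `C` of `G` of the character values `χ_V(C)`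
is a nonnegative integer. -/
theorem sum_character_over_classes_nonneg_integer (G : Type) [Group G] [Fintype G]
    (V : FDRep ℂ G) [CategoryTheory.Simple V] :
    ∃ m : ℕ, ∑ᶠ C : ConjClasses G, V.character (Quotient.out C) = (m : ℂ) := by
  classical
  haveI : Fintype (ConjClasses G) := Fintype.ofFinite _
  haveI : Invertible ((Fintype.card G : ℂ)) :=
    invertibleOfNonzero (Nat.cast_ne_zero.mpr Fintype.card_ne_zero)
  refine ⟨Module.finrank ℂ (invariants (conjRep G ⊗ V).ρ), ?_⟩
  have h1 := FDRep.average_char_eq_finrank_invariants (conjRep G ⊗ V)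
  rw [FDRep.char_tensor] at h1
  rw [finsum_eq_sum_of_fintype]
  -- Key computation: the weighted sum equals card G times the class sum
  have h2 : ∑ g : G, ((conjRep G).character * V.character) g
      = (Fintype.card G : ℂ) * ∑ C : ConjClasses G, V.character (Quotient.out C) := by
    rw [Finset.mul_sum]
    have hfw := Finset.sum_fiberwise_eq_sum_filter univ univ (fun g : G => ConjClasses.mk g)
      (fun g => ((conjRep G).character * V.character) g)
    simp only [Finset.mem_univ, Finset.filter_true] at hfw
    rw [← hfw]
    apply Finset.sum_congr rfl
    intro C _
    have hfib : ∀ g ∈ univ.filter fun h : G => ConjClasses.mk h = C,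
        ((conjRep G).character * V.character) g
          = ((Fintype.card G : ℂ) / ((univ.filter fun h : G => ConjClasses.mk h = C).card : ℂ))
              * V.character (Quotient.out C) := by
      intro g hgmem
      have hg : ConjClasses.mk g = C := (Finset.mem_filter.mp hgmem).2
      have horb : Nat.card (MulAction.orbit (ConjAct G) g)
          * Nat.card (MulAction.stabilizer (ConjAct G) g) = Fintype.card G := by
        rw [Nat.card_eq_fintype_card, Nat.card_eq_fintype_card]
        exact MulAction.card_orbit_mul_card_stabilizer_eq_card_group (ConjAct G) g
      rw [Pi.mul_apply, conjRep_char, char_eq_out G V C g hg]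
      congr 1
      rw [fiber_card_eq_orbit_card G C g hg]
      rw [eq_div_iff]
      · rw [← Nat.cast_mul, mul_comm, horb]
      · refine Nat.cast_ne_zero.mpr (Nat.card_ne_zero.mpr ⟨⟨g, MulAction.mem_orbit_self g⟩, ?_⟩)
        exact Set.Finite.to_subtype (Set.toFinite _)
    rw [Finset.sum_congr rfl hfib, Finset.sum_const, nsmul_eq_mul]
    have hne : ((univ.filter fun h : G => ConjClasses.mk h = C).card : ℂ) ≠ 0 := by
      refine Nat.cast_ne_zero.mpr (Finset.card_ne_zero_of_mem (a := Quotient.out C) ?_)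
      simp only [Finset.mem_filter, Finset.mem_univ, true_and]
      exact Quotient.out_eq C
    rw [← mul_assoc, mul_div_cancel₀ _ hne]
  rw [h2] at h1
  rw [Nat.card_eq_fintype_card, ← mul_assoc, inv_mul_cancel₀ (Nat.cast_ne_zero.mpr Fintype.card_ne_zero), one_mul] at h1
  exact h1
end

section
/- Let ω = (ω_1,...,ω_k) be a tuple of permutations in S_n such that every point of {1,...,n} that is moved by some ω_i is moved by exactly two of the permutations' cycles in total (i.e., every non-fixed point appears exactly twice among the cycle notations of the ω_i, where each ω_i is a single cycle). Then the product ω_1 ω_2 ⋯ ω_k is the identity if and only if the cycles can be perfectly paired: for every index i there exists a unique index i' ≠ i with ω_i · ω_{i'} = id (i.e., ω_{i'} = ω_i⁻¹). -/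
set_option linter.unusedSectionVars false

open Equiv Equiv.Perm Finset

variable {α : Type*} [Fintype α] [DecidableEq α]

namespace PairedAux

lemma sc_step (σ : Perm α) (x y a : α) (h1 : σ a ≠ x) (h2 : σ a ≠ y) :
    (swap x y * σ).SameCycle a (σ a) :=
  ⟨1, by simp [mul_apply, swap_apply_of_ne_of_ne h1 h2]⟩

lemma sc_hit_x (σ : Perm α) (x y a : α) (h1 : σ a = x) :
    (swap x y * σ).SameCycle a y := ⟨1, by simp [mul_apply, h1]⟩

lemma sc_hit_y (σ : Perm α) (x y a : α) (h1 : σ a = y) :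
    (swap x y * σ).SameCycle a x := ⟨1, by simp [mul_apply, h1]⟩

lemma sc_self_apply (σ : Perm α) (a : α) : σ.SameCycle a (σ a) := ⟨1, by simp⟩

lemma sc_pow (σ : Perm α) (a : α) (n : ℕ) : σ.SameCycle a ((σ ^ n) a) :=
  ⟨n, by rw [zpow_natCast]⟩

/-- outside the classes of x and y, σ-classes map into (swap x y * σ)-classes -/
lemma out' (σ : Perm α) {x y a b : α} (hax : ¬ σ.SameCycle a x) (hay : ¬ σ.SameCycle a y)
    (h : σ.SameCycle a b) : (swap x y * σ).SameCycle a b := by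
  obtain ⟨i, -, hi⟩ := h.exists_pow_eq'
  clear h
  subst hi
  induction i with
  | zero => simpa using SameCycle.refl _ _
  | succ n ih =>
    have hc : σ.SameCycle a ((σ ^ n) a) := sc_pow σ a n
    have hx' : σ ((σ ^ n) a) ≠ x := fun hh =>
      hax (hc.trans (hh ▸ sc_self_apply σ ((σ ^ n) a)))
    have hy' : σ ((σ ^ n) a) ≠ y := fun hh =>
      hay (hc.trans (hh ▸ sc_self_apply σ ((σ ^ n) a)))
    have : (σ ^ (n + 1)) a = σ ((σ ^ n) a) := by
      rw [pow_succ']; rfl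
    rw [this]
    exact ih.trans (sc_step σ x y _ hx' hy')

/-- outside the classes of x and y, (swap x y * σ)-classes map into σ-classes -/
lemma out (σ : Perm α) {x y a b : α} (hax : ¬ σ.SameCycle a x) (hay : ¬ σ.SameCycle a y)
    (h : (swap x y * σ).SameCycle a b) : σ.SameCycle a b := by
  obtain ⟨i, -, hi⟩ := h.exists_pow_eq'
  clear h
  subst hi
  induction i with
  | zero => simpa using SameCycle.refl _ _
  | succ n ih =>
    set c := ((swap x y * σ) ^ n) a with hcdef
    have hx' : σ c ≠ x := fun hh => hax (ih.trans (hh ▸ sc_self_apply σ c))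
    have hy' : σ c ≠ y := fun hh => hay (ih.trans (hh ▸ sc_self_apply σ c))
    have hstep : ((swap x y * σ) ^ (n + 1)) a = σ c := by
      rw [pow_succ']
      show (swap x y) (σ c) = σ c
      exact swap_apply_of_ne_of_ne hx' hy'
    rw [hstep]
    exact ih.trans (sc_self_apply σ c)

lemma mg1 (σ : Perm α) {x y : α} (h : ¬ σ.SameCycle x y) :
    (swap x y * σ).SameCycle x y := by
  have hex : ∃ j, 0 < j ∧ (σ ^ j) x = x :=
    ⟨orderOf σ, orderOf_pos σ, by rw [pow_orderOf_eq_one]; simp⟩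
  set j := Nat.find hex with hjdef
  obtain ⟨hj0, hjx⟩ := Nat.find_spec hex
  have claim : ∀ i, i < j → (swap x y * σ).SameCycle x ((σ ^ i) x) := by
    intro i
    induction i with
    | zero => intro _; simpa using SameCycle.refl _ _
    | succ n ih =>
      intro hn
      have ihn := ih (Nat.lt_of_succ_lt hn)
      have hne_x : σ ((σ ^ n) x) ≠ x := by
        intro hh
        have : (σ ^ (n + 1)) x = x := by rw [pow_succ']; exact hh
        exact (Nat.find_min hex hn) ⟨Nat.succ_pos n, this⟩
      have hne_y : σ ((σ ^ n) x) ≠ y := by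
        intro hh
        exact h ((sc_pow σ x n).trans (hh ▸ sc_self_apply σ _))
      have : (σ ^ (n + 1)) x = σ ((σ ^ n) x) := by rw [pow_succ']; rfl
      rw [this]
      exact ihn.trans (sc_step σ x y _ hne_x hne_y)
  have h1 : (swap x y * σ).SameCycle x ((σ ^ (j - 1)) x) :=
    claim (j - 1) (Nat.sub_lt hj0 one_pos)
  have h2 : σ ((σ ^ (j - 1)) x) = x := by
    have h3 : (σ ^ (j - 1 + 1)) x = x := by rwa [Nat.sub_add_cancel hj0]
    rw [pow_succ'] at h3
    simpa using h3
  exact h1.trans (sc_hit_x σ x y _ h2)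

lemma mg2 (σ : Perm α) {x y a b : α} (h : ¬ σ.SameCycle x y)
    (hab : σ.SameCycle a b) : (swap x y * σ).SameCycle a b := by
  obtain ⟨i, -, hi⟩ := hab.exists_pow_eq'
  clear hab
  subst hi
  induction i with
  | zero => simpa using SameCycle.refl _ _
  | succ n ih =>
    set c := (σ ^ n) a with hcdef
    have hstep : (σ ^ (n + 1)) a = σ c := by rw [pow_succ']; rfl
    rw [hstep]
    by_cases h1 : σ c = x
    · rw [h1]
      exact ih.trans ((sc_hit_x σ x y c h1).trans (mg1 σ h).symm)
    · by_cases h2 : σ c = y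
      · rw [h2]
        exact ih.trans ((sc_hit_y σ x y c h2).trans (mg1 σ h))
      · exact ih.trans (sc_step σ x y c h1 h2)

lemma sp2 (σ : Perm α) {x y a : α} (h : σ.SameCycle x a) :
    (swap x y * σ).SameCycle x a ∨ (swap x y * σ).SameCycle y a := by
  obtain ⟨i, -, hi⟩ := h.exists_pow_eq'
  clear h
  subst hi
  induction i with
  | zero => left; simpa using SameCycle.refl _ _
  | succ n ih =>
    set c := (σ ^ n) x with hcdef
    have hstep : (σ ^ (n + 1)) x = σ c := by rw [pow_succ']; rfl
    rw [hstep]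
    by_cases h1 : σ c = x
    · left; rw [h1]
    · by_cases h2 : σ c = y
      · right; rw [h2]
      · rcases ih with ih | ih
        · left; exact ih.trans (sc_step σ x y c h1 h2)
        · right; exact ih.trans (sc_step σ x y c h1 h2)


def CC (σ : Perm α) (a : α) : Finset α := univ.filter (σ.SameCycle a)

noncomputable def cN (σ : Perm α) : ℕ := (univ.image (CC σ)).card

lemma mem_CC {σ : Perm α} {a b : α} : b ∈ CC σ a ↔ σ.SameCycle a b := by
  simp [CC]

lemma CC_eq_iff {σ : Perm α} {a b : α} : CC σ a = CC σ b ↔ σ.SameCycle a b := by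
  constructor
  · intro h
    have : b ∈ CC σ b := mem_CC.2 (SameCycle.refl _ _)
    rw [← h] at this
    exact mem_CC.1 this
  · intro h
    ext c
    simp only [mem_CC]
    exact ⟨fun hc => h.symm.trans hc, fun hc => h.trans hc⟩

lemma cN_inv (σ : Perm α) : cN σ⁻¹ = cN σ := by
  have : CC σ⁻¹ = CC σ := by
    funext a; ext b; simp [mem_CC, sameCycle_inv]
  rw [cN, this, cN]

lemma cN_one : cN (1 : Perm α) = Fintype.card α := by
  have h : CC (1 : Perm α) = fun a => {a} := by
    funext a; ext b; simp [mem_CC, sameCycle_one, eq_comm]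
  rw [cN, h, Finset.card_image_of_injective _ (fun a b => by simp), card_univ]

lemma keyMerge (σ : Perm α) {x y : α} (h : ¬ σ.SameCycle x y) :
    cN (swap x y * σ) + 1 ≤ cN σ := by
  set ρ := swap x y * σ with hρ
  have hsub : univ.image (CC ρ) ⊆
      insert (CC ρ x) (((univ.image (CC σ)).erase (CC σ x)).erase (CC σ y)) := by
    intro s hs
    obtain ⟨a, -, rfl⟩ := Finset.mem_image.1 hs
    by_cases ha : σ.SameCycle a x ∨ σ.SameCycle a y
    · have : ρ.SameCycle a x := by
        rcases ha with ha | ha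
        · exact mg2 σ h ha
        · exact (mg2 σ h ha).trans (mg1 σ h).symm
      rw [CC_eq_iff.2 this]
      exact Finset.mem_insert_self _ _
    · push_neg at ha
      have hCCa : CC ρ a = CC σ a := by
        ext b
        simp only [mem_CC]
        exact ⟨fun hb => out σ ha.1 ha.2 hb, fun hb => out' σ ha.1 ha.2 hb⟩
      rw [hCCa]
      apply Finset.mem_insert_of_mem
      apply Finset.mem_erase.2
      refine ⟨fun hc => ha.2 (CC_eq_iff.1 hc), ?_⟩
      apply Finset.mem_erase.2
      exact ⟨fun hc => ha.1 (CC_eq_iff.1 hc), Finset.mem_image_of_mem _ (mem_univ a)⟩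
  have hx_mem : CC σ x ∈ univ.image (CC σ) := Finset.mem_image_of_mem _ (mem_univ x)
  have hy_mem : CC σ y ∈ (univ.image (CC σ)).erase (CC σ x) := by
    apply Finset.mem_erase.2
    exact ⟨fun hc => h (CC_eq_iff.1 hc).symm, Finset.mem_image_of_mem _ (mem_univ y)⟩
  have hcard := Finset.card_le_card hsub
  have h1 : (((univ.image (CC σ)).erase (CC σ x)).erase (CC σ y)).card
      = (univ.image (CC σ)).card - 1 - 1 := by
    rw [Finset.card_erase_of_mem hy_mem, Finset.card_erase_of_mem hx_mem]
  have h2 : 2 ≤ (univ.image (CC σ)).card := by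
    have : 1 ≤ ((univ.image (CC σ)).erase (CC σ x)).card := Finset.card_pos.2 ⟨_, hy_mem⟩
    have := Finset.card_erase_of_mem hx_mem
    omega
  have h3 := Finset.card_insert_le (CC ρ x) (((univ.image (CC σ)).erase (CC σ x)).erase (CC σ y))
  show (univ.image (CC ρ)).card + 1 ≤ (univ.image (CC σ)).card
  omega

lemma keySplit (σ : Perm α) {x y : α} (hxy : x ≠ y) (h : σ.SameCycle x y) :
    cN (swap x y * σ) ≤ cN σ + 1 := by
  set ρ := swap x y * σ with hρ
  have hσρ : σ = swap x y * ρ := by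
    rw [hρ, ← mul_assoc, swap_mul_self, one_mul]
  have hsub : univ.image (CC ρ) ⊆
      insert (CC ρ x) (insert (CC ρ y) ((univ.image (CC σ)).erase (CC σ x))) := by
    intro s hs
    obtain ⟨a, -, rfl⟩ := Finset.mem_image.1 hs
    by_cases hax : ρ.SameCycle x a
    · rw [← CC_eq_iff.2 hax]
      exact Finset.mem_insert_self _ _
    · by_cases hay : ρ.SameCycle y a
      · rw [← CC_eq_iff.2 hay]
        exact Finset.mem_insert_of_mem (Finset.mem_insert_self _ _)
      · have hax' : ¬ σ.SameCycle a x := by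
          intro hc
          rcases sp2 σ (y := y) hc.symm with hc' | hc'
          · exact hax hc'
          · exact hay hc'
        have hay' : ¬ σ.SameCycle a y := fun hc => hax' (hc.trans h.symm)
        have hCCa : CC ρ a = CC σ a := by
          ext b
          simp only [mem_CC]
          exact ⟨fun hb => out σ hax' hay' hb, fun hb => out' σ hax' hay' hb⟩
        apply Finset.mem_insert_of_mem
        apply Finset.mem_insert_of_mem
        rw [hCCa]
        apply Finset.mem_erase.2
        exact ⟨fun hc => hax' (CC_eq_iff.1 hc), Finset.mem_image_of_mem _ (mem_univ a)⟩
  have hx_mem : CC σ x ∈ univ.image (CC σ) := Finset.mem_image_of_mem _ (mem_univ x)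
  have hcard := Finset.card_le_card hsub
  have h1 := Finset.card_insert_le (CC ρ x)
    (insert (CC ρ y) ((univ.image (CC σ)).erase (CC σ x)))
  have h2 := Finset.card_insert_le (CC ρ y) ((univ.image (CC σ)).erase (CC σ x))
  have h3 : ((univ.image (CC σ)).erase (CC σ x)).card = (univ.image (CC σ)).card - 1 :=
    Finset.card_erase_of_mem hx_mem
  have h4 : 1 ≤ (univ.image (CC σ)).card := Finset.card_pos.2 ⟨_, hx_mem⟩
  show (univ.image (CC ρ)).card ≤ (univ.image (CC σ)).card + 1
  omega

lemma keyLe (σ : Perm α) (x y : α) : cN (swap x y * σ) ≤ cN σ + 1 := by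
  by_cases hxy : x = y
  · subst hxy
    have hss : swap x x * σ = σ := by
      ext z; simp [Equiv.swap_self]
    rw [hss]
    omega
  · by_cases h : σ.SameCycle x y
    · exact keySplit σ hxy h
    · have := keyMerge σ h
      omega

def Gset (l : List (Perm α)) : Set (Perm α) := {τ | τ ∈ l}

def ORel (l : List (Perm α)) (a b : α) : Prop := ∃ g ∈ Subgroup.closure (Gset l), g a = b

lemma ORel.refl' (l : List (Perm α)) (a : α) : ORel l a a := ⟨1, one_mem _, rfl⟩

lemma ORel.symm' {l : List (Perm α)} {a b : α} (h : ORel l a b) : ORel l b a := by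
  obtain ⟨g, hg, rfl⟩ := h
  exact ⟨g⁻¹, inv_mem hg, by simp⟩

lemma ORel.trans' {l : List (Perm α)} {a b c : α} (h1 : ORel l a b) (h2 : ORel l b c) :
    ORel l a c := by
  obtain ⟨g, hg, rfl⟩ := h1
  obtain ⟨g', hg', rfl⟩ := h2
  exact ⟨g' * g, mul_mem hg' hg, rfl⟩

noncomputable def OB (l : List (Perm α)) (a : α) : Finset α :=
  @Finset.filter _ (ORel l a) (Classical.decPred _) univ

lemma mem_OB {l : List (Perm α)} {a b : α} : b ∈ OB l a ↔ ORel l a b := by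
  simp [OB]

lemma OB_eq_iff {l : List (Perm α)} {a b : α} : OB l a = OB l b ↔ ORel l a b := by
  constructor
  · intro h
    have : b ∈ OB l b := mem_OB.2 (ORel.refl' l b)
    rw [← h] at this
    exact mem_OB.1 this
  · intro h
    ext c
    simp only [mem_OB]
    exact ⟨fun hc => h.symm'.trans' hc, fun hc => h.trans' hc⟩

noncomputable def bC (l : List (Perm α)) : ℕ := (univ.image (OB l)).card

lemma Gset_append (l : List (Perm α)) (t : Perm α) :
    Gset (l ++ [t]) = Gset l ∪ {t} := by
  ext τ; simp [Gset, or_comm]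

lemma ORel_mono {l : List (Perm α)} {t : Perm α} {a b : α} (h : ORel l a b) :
    ORel (l ++ [t]) a b := by
  obtain ⟨g, hg, rfl⟩ := h
  refine ⟨g, ?_, rfl⟩
  have hsub : Gset l ⊆ Gset (l ++ [t]) := fun τ hτ => by
    rw [Gset_append]; exact Set.mem_union_left _ hτ
  exact Subgroup.closure_mono hsub hg

lemma prod_mem_closure (l : List (Perm α)) : l.prod ∈ Subgroup.closure (Gset l) :=
  Subgroup.list_prod_mem _ (fun τ hτ => Subgroup.subset_closure hτ)

lemma sameCycle_orel {l : List (Perm α)} {a b : α} (h : l.prod.SameCycle a b) : ORel l a b := by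
  obtain ⟨z, hz⟩ := h
  exact ⟨l.prod ^ z, zpow_mem (prod_mem_closure l) z, hz⟩

/-- adding a swap between points already in the same orbit does not change orbits -/
lemma bLemA {l : List (Perm α)} {x y : α} (hxy : ORel l x y) :
    OB (l ++ [Equiv.swap x y]) = OB l := by
  have key : ∀ g ∈ Subgroup.closure (Gset (l ++ [Equiv.swap x y])),
      ∀ a, ∃ h ∈ Subgroup.closure (Gset l), g a = h a := by
    intro g hg
    induction hg using Subgroup.closure_induction with
    | mem τ hτ =>
      intro a
      rw [Gset_append] at hτ
      rcases hτ with hτ | hτ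
      · exact ⟨τ, Subgroup.subset_closure hτ, rfl⟩
      · rw [Set.mem_singleton_iff] at hτ
        subst hτ
        obtain ⟨g₀, hg₀, hg₀x⟩ := hxy
        by_cases hax : a = x
        · subst hax
          exact ⟨g₀, hg₀, by rw [swap_apply_left, hg₀x]⟩
        · by_cases hay : a = y
          · subst hay
            exact ⟨g₀⁻¹, inv_mem hg₀, by rw [swap_apply_right, ← hg₀x]; simp⟩
          · exact ⟨1, one_mem _, by rw [swap_apply_of_ne_of_ne hax hay]; rfl⟩
    | one => exact fun a => ⟨1, one_mem _, rfl⟩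
    | mul g g' _ _ ihg ihg' =>
      intro a
      obtain ⟨h', hh', he'⟩ := ihg' a
      obtain ⟨h, hh, he⟩ := ihg (h' a)
      exact ⟨h * h', mul_mem hh hh', by rw [mul_apply, mul_apply, he', he]⟩
    | inv g _ ihg =>
      intro a
      obtain ⟨h, hh, he⟩ := ihg (g⁻¹ a)
      refine ⟨h⁻¹, inv_mem hh, ?_⟩
      have h2 : h (g⁻¹ a) = a := by rw [← he]; simp
      calc g⁻¹ a = h⁻¹ (h (g⁻¹ a)) := by simp
        _ = h⁻¹ a := by rw [h2]
  funext a
  ext b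
  simp only [mem_OB]
  constructor
  · rintro ⟨g, hg, rfl⟩
    obtain ⟨h, hh, he⟩ := key g hg a
    exact ⟨h, hh, he.symm⟩
  · exact ORel_mono

/-- adding a swap generator decreases the orbit count by at most one -/
lemma bLemB {l : List (Perm α)} {x y : α} :
    bC l ≤ bC (l ++ [Equiv.swap x y]) + 1 := by
  set t := Equiv.swap x y with ht
  have key : ∀ g ∈ Subgroup.closure (Gset (l ++ [t])), ∀ c,
      ((ORel l c x ∨ ORel l c y) → (ORel l (g c) x ∨ ORel l (g c) y)) ∧
      (¬(ORel l c x ∨ ORel l c y) → ORel l c (g c)) := by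
    intro g hg
    induction hg using Subgroup.closure_induction with
    | mem τ hτ =>
      intro c
      rw [Gset_append] at hτ
      rcases hτ with hτ | hτ
      · have hstep : ORel l c (τ c) := ⟨τ, Subgroup.subset_closure hτ, rfl⟩
        constructor
        · rintro (hc | hc)
          · exact Or.inl (hstep.symm'.trans' hc)
          · exact Or.inr (hstep.symm'.trans' hc)
        · intro _; exact hstep
      · rw [Set.mem_singleton_iff] at hτ
        subst hτ
        by_cases hcx : c = x
        · subst hcx
          constructor
          · intro _
            rw [swap_apply_left]
            exact Or.inr (ORel.refl' l y)
          · intro hc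
            exact absurd (Or.inl (ORel.refl' l c)) hc
        · by_cases hcy : c = y
          · subst hcy
            constructor
            · intro _
              rw [swap_apply_right]
              exact Or.inl (ORel.refl' l x)
            · intro hc
              exact absurd (Or.inr (ORel.refl' l c)) hc
          · rw [swap_apply_of_ne_of_ne hcx hcy]
            exact ⟨fun hc => hc, fun _ => ORel.refl' l c⟩
    | one => exact fun c => ⟨fun hc => by simpa using hc, fun _ => by simpa using ORel.refl' l c⟩
    | mul g g' _ _ ihg ihg' =>
      intro c
      constructor
      · intro hc
        have h1 := (ihg' c).1 hc
        have h2 := (ihg (g' c)).1 h1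
        simpa [mul_apply] using h2
      · intro hc
        have h1 : ORel l c (g' c) := (ihg' c).2 hc
        have h2 : ¬(ORel l (g' c) x ∨ ORel l (g' c) y) := by
          rintro (hh | hh)
          · exact hc (Or.inl (h1.trans' hh))
          · exact hc (Or.inr (h1.trans' hh))
        have h3 : ORel l (g' c) (g (g' c)) := (ihg (g' c)).2 h2
        show ORel l c ((g * g') c)
        rw [mul_apply]
        exact h1.trans' h3
    | inv g _ ihg =>
      intro c
      constructor
      · intro hc
        by_contra hnc
        have h1 : ORel l (g⁻¹ c) (g (g⁻¹ c)) := (ihg (g⁻¹ c)).2 hnc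
        rw [show g (g⁻¹ c) = c from Equiv.apply_symm_apply g c] at h1
        rcases hc with hc | hc
        · exact hnc (Or.inl (h1.trans' hc))
        · exact hnc (Or.inr (h1.trans' hc))
      · intro hc
        by_cases hd : ORel l (g⁻¹ c) x ∨ ORel l (g⁻¹ c) y
        · exfalso
          have h1 := (ihg (g⁻¹ c)).1 hd
          rw [show g (g⁻¹ c) = c from Equiv.apply_symm_apply g c] at h1
          exact hc h1
        · have h1 : ORel l (g⁻¹ c) (g (g⁻¹ c)) := (ihg (g⁻¹ c)).2 hd
          rw [show g (g⁻¹ c) = c from Equiv.apply_symm_apply g c] at h1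
          exact h1.symm'
  -- now the counting
  have hsub : univ.image (OB l) ⊆
      insert (OB l x) (insert (OB l y)
        ((univ.image (OB (l ++ [t]))).erase (OB (l ++ [t]) x))) := by
    intro s hs
    obtain ⟨a, -, rfl⟩ := Finset.mem_image.1 hs
    by_cases ha : ORel l a x ∨ ORel l a y
    · rcases ha with ha | ha
      · rw [OB_eq_iff.2 ha]
        exact Finset.mem_insert_self _ _
      · rw [OB_eq_iff.2 ha]
        exact Finset.mem_insert_of_mem (Finset.mem_insert_self _ _)
    · have hOB : OB l a = OB (l ++ [t]) a := by
        ext b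
        simp only [mem_OB]
        constructor
        · exact ORel_mono
        · rintro ⟨g, hg, rfl⟩
          exact (key g hg a).2 ha
      apply Finset.mem_insert_of_mem
      apply Finset.mem_insert_of_mem
      rw [hOB]
      apply Finset.mem_erase.2
      refine ⟨?_, Finset.mem_image_of_mem _ (mem_univ a)⟩
      intro hc
      obtain ⟨g, hg, hgx⟩ := OB_eq_iff.1 hc
      have := (key g hg a).2 ha
      rw [hgx] at this
      exact ha (Or.inl this)
  have hx_mem : OB (l ++ [t]) x ∈ univ.image (OB (l ++ [t])) :=
    Finset.mem_image_of_mem _ (mem_univ x)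
  have hcard := Finset.card_le_card hsub
  have h1 := Finset.card_insert_le (OB l x)
    (insert (OB l y) ((univ.image (OB (l ++ [t]))).erase (OB (l ++ [t]) x)))
  have h2 := Finset.card_insert_le (OB l y) ((univ.image (OB (l ++ [t]))).erase (OB (l ++ [t]) x))
  have h3 : ((univ.image (OB (l ++ [t]))).erase (OB (l ++ [t]) x)).card
      = (univ.image (OB (l ++ [t]))).card - 1 := Finset.card_erase_of_mem hx_mem
  have h4 : 1 ≤ (univ.image (OB (l ++ [t]))).card := Finset.card_pos.2 ⟨_, hx_mem⟩
  show (univ.image (OB l)).card ≤ (univ.image (OB (l ++ [t]))).card + 1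
  omega

lemma bC_nil : bC ([] : List (Perm α)) = Fintype.card α := by
  have h : OB ([] : List (Perm α)) = fun a => {a} := by
    funext a
    ext b
    simp only [mem_OB, Finset.mem_singleton]
    constructor
    · rintro ⟨g, hg, rfl⟩
      have : g = 1 := by
        have : Subgroup.closure (Gset ([] : List (Perm α))) = ⊥ := by
          rw [show Gset ([] : List (Perm α)) = ∅ by ext; simp [Gset]]
          exact Subgroup.closure_empty
        rw [this] at hg
        simpa using hg
      rw [this]; rfl
    · rintro rfl
      exact ORel.refl' _ _
  rw [bC, h, Finset.card_image_of_injective _ (fun a b => by simp), card_univ]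

lemma QLem (l : List (Perm α)) (hl : ∀ τ ∈ l, τ.IsSwap) :
    (Fintype.card α : ℤ) - 2 * bC l + cN l.prod ≤ l.length := by
  induction l using List.reverseRecOn with
  | nil =>
    rw [List.prod_nil, bC_nil, cN_one]
    simp only [List.length_nil, Nat.cast_zero]
    omega
  | append_singleton l t ih =>
    have hlt : ∀ τ ∈ l, τ.IsSwap := fun τ hτ => hl τ (by simp [hτ])
    have ih' := ih hlt
    obtain ⟨x, y, hxy, rfl⟩ := hl t (by simp)
    have hprod : (l ++ [Equiv.swap x y]).prod = l.prod * Equiv.swap x y := by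
      rw [List.prod_append, List.prod_singleton]
    have hcN : cN (l ++ [Equiv.swap x y]).prod = cN (Equiv.swap x y * l.prod⁻¹) := by
      rw [hprod, ← cN_inv, mul_inv_rev, swap_inv]
    have hlen : ((l ++ [Equiv.swap x y]).length : ℤ) = (l.length : ℤ) + 1 := by
      simp
    by_cases hO : ORel l x y
    · have hb : bC (l ++ [Equiv.swap x y]) = bC l := by rw [bC, bLemA hO]; rfl
      have hc : cN (Equiv.swap x y * l.prod⁻¹) ≤ cN l.prod⁻¹ + 1 := keyLe _ x y
      rw [cN_inv] at hc
      rw [hcN, hb, hlen]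
      omega
    · have hnsc : ¬ l.prod⁻¹.SameCycle x y := by
        rw [sameCycle_inv]
        exact fun hsc => hO (sameCycle_orel hsc)
      have hc := keyMerge l.prod⁻¹ hnsc
      rw [cN_inv] at hc
      have hb : bC l ≤ bC (l ++ [Equiv.swap x y]) + 1 := bLemB
      rw [hcN, hlen]
      omega

lemma HT (TS : List (Perm α)) (S : Finset α)
    (hswap : ∀ τ ∈ TS, τ.IsSwap)
    (hsupp : ∀ τ ∈ TS, τ.support ⊆ S)
    (hconn : ∀ a ∈ S, ∀ b ∈ S, ∃ g ∈ Subgroup.closure (Gset TS), g a = b)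
    (hprod : TS.prod = 1) :
    2 * S.card ≤ TS.length + 2 := by
  rcases S.eq_empty_or_nonempty with hS | ⟨a₀, ha₀⟩
  · rw [hS]
    simp
  · have hpres : ∀ g ∈ Subgroup.closure (Gset TS), ∀ a,
        (a ∈ S → g a ∈ S) ∧ (a ∉ S → g a = a) := by
      intro g hg
      induction hg using Subgroup.closure_induction with
      | mem τ hτ =>
        intro a
        constructor
        · intro haS
          by_cases hm : a ∈ τ.support
          · exact hsupp τ hτ (apply_mem_support.2 hm)
          · rw [notMem_support.1 hm]; exact haS
        · intro haS
          have : a ∉ τ.support := fun hm => haS (hsupp τ hτ hm)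
          exact notMem_support.1 this
      | one => exact fun a => ⟨fun h => h, fun _ => rfl⟩
      | mul g g' _ _ ihg ihg' =>
        intro a
        constructor
        · intro haS
          rw [mul_apply]
          exact (ihg _).1 ((ihg' a).1 haS)
        · intro haS
          rw [mul_apply, (ihg' a).2 haS]
          exact (ihg a).2 haS
      | inv g _ ihg =>
        intro a
        constructor
        · intro haS
          by_contra hc
          have h1 := (ihg (g⁻¹ a)).2 hc
          rw [show g (g⁻¹ a) = a from Equiv.apply_symm_apply g a] at h1
          rw [← h1] at hc
          exact hc haS
        · intro haS
          by_cases hc : g⁻¹ a ∈ S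
          · have h1 := (ihg _).1 hc
            rw [show g (g⁻¹ a) = a from Equiv.apply_symm_apply g a] at h1
            exact absurd h1 haS
          · have h1 := (ihg _).2 hc
            rw [show g (g⁻¹ a) = a from Equiv.apply_symm_apply g a] at h1
            exact h1.symm
    have hOB1 : ∀ a ∈ S, OB TS a = S := by
      intro a haS
      ext b
      simp only [mem_OB]
      constructor
      · rintro ⟨g, hg, rfl⟩
        exact (hpres g hg a).1 haS
      · intro hbS
        exact hconn a haS b hbS
    have hOB2 : ∀ a, a ∉ S → OB TS a = {a} := by
      intro a haS
      ext b
      simp only [mem_OB, Finset.mem_singleton]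
      constructor
      · rintro ⟨g, hg, rfl⟩
        exact (hpres g hg a).2 haS
      · rintro rfl
        exact ORel.refl' _ _
    have himg : univ.image (OB TS) = insert S ((univ \ S).image (fun a => ({a} : Finset α))) := by
      ext s
      constructor
      · intro hs
        obtain ⟨a, -, rfl⟩ := Finset.mem_image.1 hs
        by_cases haS : a ∈ S
        · rw [hOB1 a haS]
          exact Finset.mem_insert_self _ _
        · rw [hOB2 a haS]
          exact Finset.mem_insert_of_mem
            (Finset.mem_image_of_mem _ (Finset.mem_sdiff.2 ⟨mem_univ a, haS⟩))
      · intro hs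
        rcases Finset.mem_insert.1 hs with rfl | hs
        · exact Finset.mem_image.2 ⟨a₀, mem_univ _, hOB1 a₀ ha₀⟩
        · obtain ⟨a, ha, rfl⟩ := Finset.mem_image.1 hs
          exact Finset.mem_image.2 ⟨a, mem_univ _, hOB2 a (Finset.mem_sdiff.1 ha).2⟩
    have hnotmem : S ∉ (univ \ S).image (fun a => ({a} : Finset α)) := by
      intro hc
      obtain ⟨a, ha, hEq⟩ := Finset.mem_image.1 hc
      have haS := (Finset.mem_sdiff.1 ha).2
      have h1 : a₀ ∈ ({a} : Finset α) := by rw [hEq]; exact ha₀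
      have h2 : a₀ = a := Finset.mem_singleton.1 h1
      rw [h2] at ha₀
      exact haS ha₀
    have hbC : bC TS = Fintype.card α - S.card + 1 := by
      rw [bC, himg, Finset.card_insert_of_notMem hnotmem,
        Finset.card_image_of_injective _ (fun a b => by simp),
        Finset.card_sdiff_of_subset (Finset.subset_univ S), card_univ]
    have hQ := QLem TS hswap
    rw [hprod, cN_one, hbC] at hQ
    have hSle : S.card ≤ Fintype.card α := by
      rw [← card_univ]
      exact Finset.card_le_card (Finset.subset_univ S)
    have hcast : ((Fintype.card α - S.card + 1 : ℕ) : ℤ)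
        = (Fintype.card α : ℤ) - S.card + 1 := by
      push_cast [Nat.cast_sub hSle]
      ring
    rw [hcast] at hQ
    zify
    omega

lemma cycle_fact :
    ∀ (N : ℕ) (σ : Perm α), σ.support.card ≤ N → σ.IsCycle →
    ∃ TS : List (Perm α), TS.prod = σ ∧ TS.length + 1 = σ.support.card ∧
      ∀ τ ∈ TS, ∃ u v, u ≠ v ∧ τ = Equiv.swap u v ∧ u ∈ σ.support ∧ v ∈ σ.support := by
  intro N
  induction N with
  | zero =>
    intro σ hN hc
    have := hc.two_le_card_support
    omega
  | succ N ih =>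
    intro σ hN hc
    obtain ⟨x, hx, -⟩ := id hc
    by_cases h2 : σ (σ x) = x
    · have hswap : σ = Equiv.swap x (σ x) := by
        ext z
        by_cases hz1 : z = x
        · subst hz1; rw [swap_apply_left]
        · by_cases hz2 : z = σ x
          · subst hz2; rw [swap_apply_right]; exact h2
          · rw [swap_apply_of_ne_of_ne hz1 hz2]
            by_contra hzm
            have hsc : σ.SameCycle x z := hc.sameCycle hx hzm
            obtain ⟨i, -, hiz⟩ := hsc.exists_pow_eq'
            have horb : ∀ j, (σ ^ j) x = x ∨ (σ ^ j) x = σ x := by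
              intro j
              induction j with
              | zero => left; rfl
              | succ n ihn =>
                rcases ihn with hh | hh
                · right
                  rw [pow_succ', mul_apply, hh]
                · left
                  rw [pow_succ', mul_apply, hh]
                  exact h2
            rcases horb i with hh | hh <;> rw [hiz] at hh
            · exact hz1 hh
            · exact hz2 hh
      have hcard2 : σ.support.card = 2 := by
        rw [hswap]
        exact card_support_swap (Ne.symm hx)
      refine ⟨[Equiv.swap x (σ x)], by simp [← hswap], by simp [hcard2], ?_⟩
      intro τ hτ
      rw [List.mem_singleton] at hτ
      subst hτ
      exact ⟨x, σ x, Ne.symm hx, rfl, mem_support.2 hx, apply_mem_support.2 (mem_support.2 hx)⟩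
    · set σ' := Equiv.swap x (σ x) * σ with hσ'
      have hc' : σ'.IsCycle := hc.swap_mul hx h2
      have hsupp' : σ'.support = σ.support \ {x} := support_swap_mul_eq σ x h2
      have hcard' : σ'.support.card = σ.support.card - 1 := by
        rw [hsupp', Finset.card_sdiff_of_subset (by simpa using mem_support.2 hx)]
        simp
      have h2le := hc.two_le_card_support
      obtain ⟨TS', hprod', hlen', hs'⟩ := ih σ' (by omega) hc'
      refine ⟨Equiv.swap x (σ x) :: TS', ?_, ?_, ?_⟩
      · rw [List.prod_cons, hprod', hσ', ← mul_assoc, swap_mul_self, one_mul]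
      · simp only [List.length_cons]
        omega
      · intro τ hτ
        rcases List.mem_cons.1 hτ with rfl | hτ
        · exact ⟨x, σ x, Ne.symm hx, rfl, mem_support.2 hx, apply_mem_support.2 (mem_support.2 hx)⟩
        · obtain ⟨u, v, huv, hτeq, hu, hv⟩ := hs' τ hτ
          have hsub : σ'.support ⊆ σ.support := by
            rw [hsupp']; exact Finset.sdiff_subset
          exact ⟨u, v, huv, hτeq, hsub hu, hsub hv⟩

lemma support_map_prod_le {ι : Type*} (w : ι → Perm α) (S : Finset α) :
    ∀ l : List ι, (∀ j ∈ l, (w j).support ⊆ S) → ((l.map w).prod).support ⊆ S := by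
  intro l
  induction l with
  | nil => simp
  | cons a l ih =>
    intro hl
    rw [List.map_cons, List.prod_cons]
    intro z hz
    rcases Finset.mem_union.1 (support_mul_le (w a) ((l.map w).prod) hz) with hz | hz
    · exact hl a (List.mem_cons_self) hz
    · exact ih (fun j hj => hl j (List.mem_cons_of_mem a hj)) hz

lemma map_prod_filter {ι : Type*} (w : ι → Perm α) (p : ι → Bool)
    (hcomm : ∀ i j, p i = true → p j = false → Commute (w i) (w j)) :
    ∀ l : List ι, (l.map w).prod
      = ((l.filter p).map w).prod * ((l.filter (fun i => ! p i)).map w).prod := by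
  intro l
  induction l with
  | nil => simp
  | cons a l ih =>
    by_cases hpa : p a = true
    · rw [List.map_cons, List.prod_cons, ih,
        List.filter_cons_of_pos hpa,
        List.filter_cons_of_neg (by simp [hpa]),
        List.map_cons, List.prod_cons, mul_assoc]
    · have hpa' : p a = false := by simpa using hpa
      rw [List.map_cons, List.prod_cons, ih,
        List.filter_cons_of_neg (by simp [hpa']),
        List.filter_cons_of_pos (by simp [hpa']),
        List.map_cons, List.prod_cons]
      have hcom : Commute (w a) (((l.filter p).map w).prod) := by
        apply Commute.list_prod_right
        intro τ hτ
        obtain ⟨j, hj, rfl⟩ := List.mem_map.1 hτ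
        have hpj : p j = true := (List.mem_filter.1 hj).2
        exact (hcomm j a hpj hpa').symm
      rw [← mul_assoc, hcom.eq, mul_assoc]

lemma disjoint_mul_eq_one {σ τ : Perm α} (hd : _root_.Disjoint σ.support τ.support)
    (h : σ * τ = 1) : σ = 1 ∧ τ = 1 := by
  have hτ : τ = σ⁻¹ := eq_inv_of_mul_eq_one_right h
  subst hτ
  rw [support_inv] at hd
  have hempty : σ.support = ∅ := by simpa using _root_.disjoint_self.1 hd
  have hσ : σ = 1 := support_eq_empty_iff.1 hempty
  exact ⟨hσ, by rw [hσ]; simp⟩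

lemma forward_exists {k : ℕ} (w : Fin k → Perm α)
    (hcyc : ∀ i, (w i).IsCycle)
    (hsym : ∀ a : α, (univ.filter fun i => a ∈ (w i).support).card = 0 ∨
      (univ.filter fun i => a ∈ (w i).support).card = 2)
    (hprod : ((List.finRange k).map w).prod = 1) (i : Fin k) :
    ∃ j, j ≠ i ∧ w j = (w i)⁻¹ := by
  classical
  set Rel : Fin k → Fin k → Prop :=
    fun p q => ((w p).support ∩ (w q).support).Nonempty with hRel
  have hRelSymm : Symmetric Rel := by
    intro p q ⟨c, hc⟩
    exact ⟨c, by rwa [Finset.inter_comm]⟩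
  set E := Relation.ReflTransGen Rel with hE
  have hEsymm : ∀ {p q}, E p q → E q p := fun h =>
    by haveI : Std.Symm Rel := ⟨fun _ _ hh => hRelSymm hh⟩; exact Std.Symm.symm _ _ h
  set T : Finset (Fin k) := univ.filter (E i) with hT
  have hmemT : ∀ j, j ∈ T ↔ E i j := by
    intro j; simp [hT]
  have hiT : i ∈ T := (hmemT i).2 Relation.ReflTransGen.refl
  have hTB : ∀ a' (j j' : Fin k), a' ∈ (w j).support → a' ∈ (w j').support →
      j ∈ T → j' ∈ T := by
    intro a' j j' h1 h2 hj
    refine (hmemT j').2 (Relation.ReflTransGen.tail ((hmemT j).1 hj) ?_)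
    exact ⟨a', Finset.mem_inter.2 ⟨h1, h2⟩⟩
  set S : Finset α := T.biUnion (fun j => (w j).support) with hS
  have hsuppS : ∀ j ∈ T, (w j).support ⊆ S := by
    intro j hj
    rw [hS]
    exact Finset.subset_biUnion_of_mem (fun j => (w j).support) hj
  have hSmem : ∀ a', a' ∈ S ↔ ∃ j ∈ T, a' ∈ (w j).support := by
    intro a'; simp [hS]
  -- split the product
  set p : Fin k → Bool := fun j => decide (j ∈ T) with hp
  have hcomm : ∀ u v, p u = true → p v = false → Commute (w u) (w v) := by
    intro u v hu hv
    have huT : u ∈ T := by simpa [hp] using hu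
    have hvT : v ∉ T := by simpa [hp] using hv
    have hd : _root_.Disjoint (w u).support (w v).support := by
      rw [Finset.disjoint_left]
      intro a' ha1 ha2
      exact hvT (hTB a' u v ha1 ha2 huT)
    exact (disjoint_iff_disjoint_support.2 hd).commute
  set lT := (List.finRange k).filter p with hlT
  have hsplit := map_prod_filter w p hcomm (List.finRange k)
  rw [hprod] at hsplit
  have hd12 : _root_.Disjoint ((lT.map w).prod).support
      ((((List.finRange k).filter (fun j => ! p j)).map w).prod).support := by
    have hs1 : ((lT.map w).prod).support ⊆ S := by
      apply support_map_prod_le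
      intro j hj
      have : j ∈ T := by
        have := (List.mem_filter.1 hj).2
        simpa [hp] using this
      exact hsuppS j this
    have hs2 : ((((List.finRange k).filter (fun j => ! p j)).map w).prod).support ⊆ univ \ S := by
      apply support_map_prod_le
      intro j hj
      have hjT : j ∉ T := by
        have := (List.mem_filter.1 hj).2
        simpa [hp] using this
      intro a' ha'
      refine Finset.mem_sdiff.2 ⟨mem_univ _, fun haS => ?_⟩
      obtain ⟨j', hj', haj'⟩ := (hSmem a').1 haS
      exact hjT (hTB a' j' j haj' ha' hj')
    exact Finset.disjoint_left.2 fun a' h1 h2 =>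
      (Finset.mem_sdiff.1 (hs2 h2)).2 (hs1 h1)
  have hP1 : (lT.map w).prod = 1 := (disjoint_mul_eq_one hd12 hsplit.symm).1
  -- the point a and its two-cycle set
  have hanon : (w i).support.Nonempty :=
    Finset.card_pos.1 (lt_of_lt_of_le two_pos (hcyc i).two_le_card_support)
  obtain ⟨a, ha⟩ := hanon
  have hiFa : i ∈ univ.filter (fun j => a ∈ (w j).support) := by
    simp only [Finset.mem_filter, mem_univ, true_and]
    exact ha
  have hFa2 : (univ.filter (fun j => a ∈ (w j).support)).card = 2 := by
    rcases hsym a with h0 | h2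
    · rw [Finset.card_eq_zero.1 h0] at hiFa
      simp at hiFa
    · exact h2
  -- double counting
  have hdc : ∑ j ∈ T, (w j).support.card = 2 * S.card := by
    have step1 : ∀ j ∈ T, (w j).support.card = ∑ b ∈ S, (if b ∈ (w j).support then 1 else 0) := by
      intro j hj
      rw [Finset.sum_boole]
      rw [Finset.filter_mem_eq_inter, Finset.inter_eq_right.2 (hsuppS j hj)]
      simp
    rw [Finset.sum_congr rfl step1, Finset.sum_comm]
    have step2 : ∀ b ∈ S, ∑ j ∈ T, (if b ∈ (w j).support then 1 else 0) = 2 := by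
      intro b hb
      rw [Finset.sum_boole]
      have hTfil : T.filter (fun j => b ∈ (w j).support)
          = univ.filter (fun j => b ∈ (w j).support) := by
        ext j
        simp only [Finset.mem_filter, mem_univ, true_and]
        constructor
        · exact fun h => h.2
        · intro h
          obtain ⟨j', hj', hbj'⟩ := (hSmem b).1 hb
          exact ⟨hTB b j' j hbj' h hj', h⟩
      rw [hTfil]
      have hbcard : (univ.filter (fun j => b ∈ (w j).support)).card = 2 := by
        rcases hsym b with h0 | h2
        · exfalso
          obtain ⟨j', hj', hbj'⟩ := (hSmem b).1 hb
          have hj'' : j' ∈ univ.filter (fun j => b ∈ (w j).support) := by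
            simp only [Finset.mem_filter, mem_univ, true_and]
            exact hbj'
          rw [Finset.card_eq_zero.1 h0] at hj''
          simp at hj''
        · exact h2
      simpa using hbcard
    rw [Finset.sum_congr rfl step2, Finset.sum_const, smul_eq_mul, mul_comm]
  -- swap factorizations
  have hfact := fun j : Fin k => cycle_fact ((w j).support.card) (w j) le_rfl (hcyc j)
  choose F hF1 hF2 hF3 using hfact
  set TS := (lT.map F).flatten with hTS
  have hTSprod : TS.prod = (lT.map w).prod := by
    rw [hTS, List.prod_flatten, List.map_map]
    congr 1
    apply List.map_congr_left
    intro j _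
    exact hF1 j
  have hmemTS : ∀ j ∈ lT, ∀ τ ∈ F j, τ ∈ TS := by
    intro j hj τ hτ
    exact List.mem_flatten.2 ⟨F j, List.mem_map_of_mem hj, hτ⟩
  have hlTmem : ∀ j, j ∈ lT ↔ j ∈ T := by
    intro j
    simp [hlT, List.mem_filter, hp]
  have hswapTS : ∀ τ ∈ TS, τ.IsSwap := by
    intro τ hτ
    obtain ⟨L, hL, hτL⟩ := List.mem_flatten.1 hτ
    obtain ⟨j, hj, rfl⟩ := List.mem_map.1 hL
    obtain ⟨u, v, huv, hτeq, -, -⟩ := hF3 j τ hτL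
    exact ⟨u, v, huv, hτeq⟩
  have hsuppTS : ∀ τ ∈ TS, τ.support ⊆ S := by
    intro τ hτ
    obtain ⟨L, hL, hτL⟩ := List.mem_flatten.1 hτ
    obtain ⟨j, hj, rfl⟩ := List.mem_map.1 hL
    obtain ⟨u, v, huv, hτeq, hu, hv⟩ := hF3 j τ hτL
    have hjT : j ∈ T := (hlTmem j).1 hj
    rw [hτeq, support_swap huv]
    intro z hz
    rcases Finset.mem_insert.1 hz with rfl | hz
    · exact hsuppS j hjT hu
    · rw [Finset.mem_singleton.1 hz]
      exact hsuppS j hjT hv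
  -- connectivity
  have hwmem : ∀ j ∈ T, w j ∈ Subgroup.closure (Gset TS) := by
    intro j hj
    rw [← hF1 j]
    apply Subgroup.list_prod_mem
    intro τ hτ
    exact Subgroup.subset_closure (hmemTS j ((hlTmem j).2 hj) τ hτ)
  have hcycreach : ∀ j ∈ T, ∀ a' ∈ (w j).support, ∀ b' ∈ (w j).support,
      ∃ g ∈ Subgroup.closure (Gset TS), g a' = b' := by
    intro j hj a' ha' b' hb'
    obtain ⟨z, hz⟩ := (hcyc j).sameCycle (mem_support.1 ha') (mem_support.1 hb')
    exact ⟨(w j) ^ z, zpow_mem (hwmem j hj) z, hz⟩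
  have hreach : ∀ q, E i q → ∀ b' ∈ (w q).support,
      ∃ g ∈ Subgroup.closure (Gset TS), g a = b' := by
    intro q hq
    induction hq with
    | refl => exact fun b' hb' => hcycreach i hiT a ha b' hb'
    | @tail q1 q2 hq1 hrel ih =>
      intro b' hb'
      have hq2T : q2 ∈ T := (hmemT q2).2 (Relation.ReflTransGen.tail hq1 hrel)
      obtain ⟨cpt, hcpt⟩ := hrel
      rw [Finset.mem_inter] at hcpt
      obtain ⟨g1, hg1, hg1e⟩ := ih cpt hcpt.1
      obtain ⟨g2, hg2, hg2e⟩ := hcycreach q2 hq2T cpt hcpt.2 b' hb'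
      exact ⟨g2 * g1, mul_mem hg2 hg1, by rw [mul_apply, hg1e, hg2e]⟩
  have hconn : ∀ a' ∈ S, ∀ b' ∈ S, ∃ g ∈ Subgroup.closure (Gset TS), g a' = b' := by
    intro a' ha' b' hb'
    obtain ⟨j1, hj1, haj1⟩ := (hSmem a').1 ha'
    obtain ⟨j2, hj2, hbj2⟩ := (hSmem b').1 hb'
    obtain ⟨g1, hg1, hg1e⟩ := hreach j1 ((hmemT j1).1 hj1) a' haj1
    obtain ⟨g2, hg2, hg2e⟩ := hreach j2 ((hmemT j2).1 hj2) b' hbj2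
    refine ⟨g2 * g1⁻¹, mul_mem hg2 (inv_mem hg1), ?_⟩
    rw [mul_apply, ← hg1e, show g1⁻¹ (g1 a) = a from Equiv.symm_apply_apply g1 a, hg2e]
  -- apply Hurwitz bound
  have hHT := HT TS S hswapTS hsuppTS hconn (by rw [hTSprod]; exact hP1)
  -- length bookkeeping
  have hlTnodup : lT.Nodup := (List.nodup_finRange k).filter _
  have hlTfin : lT.toFinset = T := by
    ext j
    rw [List.mem_toFinset]
    exact hlTmem j
  have hTSlen : TS.length = ∑ j ∈ T, (F j).length := by
    rw [hTS, List.length_flatten, List.map_map, ← hlTfin,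
      List.sum_toFinset _ hlTnodup]
    rfl
  have hlen2 : TS.length + T.card = 2 * S.card := by
    rw [hTSlen, ← hdc, Finset.card_eq_sum_ones T, ← Finset.sum_add_distrib]
    exact Finset.sum_congr rfl fun j _ => hF2 j
  have hTcard : T.card ≤ 2 := by omega
  -- identify T = {i, j0}
  obtain ⟨j0, hj0Fa, hj0i⟩ := Finset.exists_mem_ne (by omega : 1 <
    (univ.filter (fun j => a ∈ (w j).support)).card) i
  have haj0 : a ∈ (w j0).support := (Finset.mem_filter.1 hj0Fa).2
  have hj0T : j0 ∈ T := hTB a i j0 ha haj0 hiT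
  have hpairsub : ({i, j0} : Finset (Fin k)) ⊆ T := by
    intro z hz
    rcases Finset.mem_insert.1 hz with rfl | hz
    · exact hiT
    · rw [Finset.mem_singleton.1 hz]
      exact hj0T
  have hpaircard : ({i, j0} : Finset (Fin k)).card = 2 :=
    Finset.card_pair (Ne.symm hj0i)
  have hTeq : T = {i, j0} :=
    (Finset.eq_of_subset_of_card_le hpairsub (by rw [hpaircard]; exact hTcard)).symm
  -- lT is a two-element list
  have hlT2 : lT.length = 2 := by
    rw [← List.toFinset_card_of_nodup hlTnodup, hlTfin, hTeq, hpaircard]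
  obtain ⟨u, v, hluv⟩ := List.length_eq_two.1 hlT2
  have huv : u ≠ v := by
    have := hluv ▸ hlTnodup
    simp only [List.nodup_cons, List.mem_singleton] at this
    exact this.1
  have huT : u ∈ ({i, j0} : Finset (Fin k)) := by
    rw [← hTeq, ← hlTfin, List.mem_toFinset, hluv]
    simp
  have hvT : v ∈ ({i, j0} : Finset (Fin k)) := by
    rw [← hTeq, ← hlTfin, List.mem_toFinset, hluv]
    simp
  have hProd2 : w u * w v = 1 := by
    rw [hluv] at hP1
    simpa using hP1
  simp only [Finset.mem_insert, Finset.mem_singleton] at huT hvT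
  rcases huT with hui | huj0
  · have hvj0 : v = j0 := by
      rcases hvT with hvi | h
      · exact absurd (hui.trans hvi.symm) huv
      · exact h
    refine ⟨j0, hj0i, ?_⟩
    have hthis := eq_inv_of_mul_eq_one_right hProd2
    rw [hui, hvj0] at hthis
    exact hthis
  · have hvi : v = i := by
      rcases hvT with h | hvj0
      · exact h
      · exact absurd (huj0.trans hvj0.symm) huv
    refine ⟨j0, hj0i, ?_⟩
    have hthis := eq_inv_of_mul_eq_one_left hProd2
    rw [huj0, hvi] at hthis
    exact hthis

lemma reverse_dir {k : ℕ} (w : Fin k → Perm α)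
    (hsym : ∀ a : α, (univ.filter fun i => a ∈ (w i).support).card = 0 ∨
      (univ.filter fun i => a ∈ (w i).support).card = 2)
    (hp : ∀ i, ∃! i', i' ≠ i ∧ w i' = (w i)⁻¹) :
    ((List.finRange k).map w).prod = 1 := by
  classical
  have hp' : ∀ i, ∃ j, (j ≠ i ∧ w j = (w i)⁻¹) ∧
      ∀ y, (y ≠ i ∧ w y = (w i)⁻¹) → y = j := hp
  choose pt hpt huniq using hp'
  have hptne : ∀ i, pt i ≠ i := fun i => (hpt i).1
  have hptw : ∀ i, w (pt i) = (w i)⁻¹ := fun i => (hpt i).2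
  have hptinv : ∀ i, pt (pt i) = i := by
    intro i
    exact (huniq (pt i) i ⟨Ne.symm (hptne i), by rw [hptw i, inv_inv]⟩).symm
  have hdisj : ∀ i j, j ≠ i → j ≠ pt i → _root_.Disjoint (w i).support (w j).support := by
    intro i j hji hjpt
    rw [Finset.disjoint_left]
    intro a hai haj
    have hapti : a ∈ (w (pt i)).support := by
      rw [hptw i, support_inv]
      exact hai
    have hsub : ({i, pt i, j} : Finset (Fin k)) ⊆ univ.filter (fun m => a ∈ (w m).support) := by
      intro m hm
      simp only [Finset.mem_insert, Finset.mem_singleton] at hm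
      simp only [Finset.mem_filter, mem_univ, true_and]
      rcases hm with rfl | rfl | rfl
      · exact hai
      · exact hapti
      · exact haj
    have hcard3 : ({i, pt i, j} : Finset (Fin k)).card = 3 := by
      rw [Finset.card_insert_of_notMem, Finset.card_insert_of_notMem, Finset.card_singleton]
      · simp only [Finset.mem_singleton]
        exact Ne.symm hjpt
      · simp only [Finset.mem_insert, Finset.mem_singleton]
        push_neg
        exact ⟨Ne.symm (hptne i), Ne.symm hji⟩
    rcases hsym a with h0 | h2
    · have hi' : i ∈ univ.filter (fun m => a ∈ (w m).support) := by
        simp only [Finset.mem_filter, mem_univ, true_and]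
        exact hai
      rw [Finset.card_eq_zero.1 h0] at hi'
      simp at hi'
    · have := Finset.card_le_card hsub
      omega
  have main : ∀ (N : ℕ) (l : List (Fin k)), l.length ≤ N → l.Nodup →
      (∀ m ∈ l, pt m ∈ l) → (l.map w).prod = 1 := by
    intro N
    induction N with
    | zero =>
      intro l hl _ _
      have hnil : l = [] := List.length_eq_zero_iff.1 (by omega)
      subst hnil
      simp
    | succ N ih =>
      intro l hlen hnodup hclosed
      cases l with
      | nil => simp
      | cons m l' =>
        have hptm : pt m ∈ l' := by
          have hm := hclosed m (List.mem_cons_self)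
          rcases List.mem_cons.1 hm with h | h
          · exact absurd h (hptne m)
          · exact h
        obtain ⟨l1, l2, rfl⟩ := List.append_of_mem hptm
        have hnodup' : (l1 ++ pt m :: l2).Nodup := (List.nodup_cons.1 hnodup).2
        have hmnotin : m ∉ l1 ++ pt m :: l2 := (List.nodup_cons.1 hnodup).1
        have hptml1 : pt m ∉ l1 := by
          rcases List.nodup_append.1 hnodup' with ⟨-, -, hdis⟩
          intro hc
          exact hdis _ hc _ List.mem_cons_self rfl
        have hptml2 : pt m ∉ l2 := by
          rcases List.nodup_append.1 hnodup' with ⟨-, hn2, -⟩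
          exact (List.nodup_cons.1 hn2).1
        have hcomm : Commute (w (pt m)) ((l1.map w).prod) := by
          apply Commute.list_prod_right
          intro τ hτ
          obtain ⟨u, hu, rfl⟩ := List.mem_map.1 hτ
          have hum : u ≠ m := fun h =>
            hmnotin (h ▸ List.mem_append_left _ hu)
          have hupt : u ≠ pt m := fun h => hptml1 (h ▸ hu)
          have hd := hdisj (pt m) u hupt (by rw [hptinv m]; exact hum)
          exact (disjoint_iff_disjoint_support.2 hd).commute
        have hprodeq : ((m :: (l1 ++ pt m :: l2)).map w).prod
            = ((l1 ++ l2).map w).prod := by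
          rw [List.map_cons, List.prod_cons, List.map_append, List.prod_append,
            List.map_cons, List.prod_cons, List.map_append, List.prod_append]
          rw [← mul_assoc (List.prod (List.map w l1)), ← hcomm.eq, mul_assoc, ← mul_assoc]
          rw [hptw m]
          simp
        rw [hprodeq]
        apply ih
        · have := hlen
          simp only [List.length_cons, List.length_append] at this ⊢
          omega
        · have hsl : (l1 ++ l2).Sublist (l1 ++ pt m :: l2) :=
            List.Sublist.append_left (List.sublist_cons_self _ _) l1
          exact hnodup'.sublist hsl
        · intro u hu
          have humem : u ∈ m :: (l1 ++ pt m :: l2) := by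
            rcases List.mem_append.1 hu with h | h
            · exact List.mem_cons_of_mem _ (List.mem_append_left _ h)
            · exact List.mem_cons_of_mem _ (List.mem_append_right _ (List.mem_cons_of_mem _ h))
          have hptu := hclosed u humem
          have hum : u ≠ m := by
            intro hc
            subst hc
            exact hmnotin (by
              rcases List.mem_append.1 hu with h | h
              · exact List.mem_append_left _ h
              · exact List.mem_append_right _ (List.mem_cons_of_mem _ h))
          have hptum : pt u ≠ m := by
            intro hc
            have : u = pt m := by rw [← hptinv u, hc]
            subst this
            rcases List.mem_append.1 hu with h | h
            · exact hptml1 h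
            · exact hptml2 h
          have hptupt : pt u ≠ pt m := by
            intro hc
            have : u = m := by rw [← hptinv u, hc, hptinv m]
            exact hum this
          rcases List.mem_cons.1 hptu with h | h
          · exact absurd h hptum
          · rcases List.mem_append.1 h with h | h
            · exact List.mem_append_left _ h
            · rcases List.mem_cons.1 h with h | h
              · exact absurd h hptupt
              · exact List.mem_append_right _ h
  exact main k (List.finRange k) (by simp) (List.nodup_finRange k)
    (fun m _ => List.mem_finRange _)

end PairedAux

/-- Let `w = (w 1, …, w k)` be a tuple of cycles in `S_n` such that every point
is moved by either none or exactly two of the cycles.  Then the product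
`w 1 ⋯ w k` is the identity if and only if the cycles can be perfectly paired:
for every index `i` there is a unique index `i' ≠ i` with `w i' = (w i)⁻¹`. -/
theorem prod_eq_one_iff_paired (n k : ℕ) (w : Fin k → Equiv.Perm (Fin n))
    (hcyc : ∀ i, (w i).IsCycle)
    (hsym : ∀ a : Fin n,
      Nat.card {i // a ∈ (w i).support} = 0 ∨ Nat.card {i // a ∈ (w i).support} = 2) :
    (List.ofFn w).prod = 1 ↔ ∀ i, ∃! i', i' ≠ i ∧ w i' = (w i)⁻¹ := by
  classical
  have hsym' : ∀ a : Fin n,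
      (univ.filter fun i => a ∈ (w i).support).card = 0 ∨
      (univ.filter fun i => a ∈ (w i).support).card = 2 := by
    intro a
    have h1 : Nat.card {i // a ∈ (w i).support}
        = (univ.filter fun i => a ∈ (w i).support).card := by
      rw [Nat.card_eq_fintype_card, Fintype.card_subtype]
    rcases hsym a with h | h
    · left; rw [← h1]; exact h
    · right; rw [← h1]; exact h
  rw [List.ofFn_eq_map]
  constructor
  · intro h1 i
    obtain ⟨j0, hj0i, hj0⟩ := PairedAux.forward_exists w hcyc hsym' h1 i
    refine ⟨j0, ⟨hj0i, hj0⟩, ?_⟩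
    rintro j' ⟨hj'i, hj'⟩
    by_contra hne
    have hanon : (w i).support.Nonempty :=
      Finset.card_pos.1 (lt_of_lt_of_le two_pos (hcyc i).two_le_card_support)
    obtain ⟨a, ha⟩ := hanon
    have haj0 : a ∈ (w j0).support := by rw [hj0, Equiv.Perm.support_inv]; exact ha
    have haj' : a ∈ (w j').support := by rw [hj', Equiv.Perm.support_inv]; exact ha
    have hsub : ({i, j0, j'} : Finset (Fin k)) ⊆ univ.filter (fun m => a ∈ (w m).support) := by
      intro m hm
      simp only [Finset.mem_insert, Finset.mem_singleton] at hm
      simp only [Finset.mem_filter, mem_univ, true_and]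
      rcases hm with rfl | rfl | rfl
      · exact ha
      · exact haj0
      · exact haj'
    have hcard3 : ({i, j0, j'} : Finset (Fin k)).card = 3 := by
      rw [Finset.card_insert_of_notMem, Finset.card_insert_of_notMem, Finset.card_singleton]
      · simp only [Finset.mem_singleton]
        exact fun hc => hne hc.symm
      · simp only [Finset.mem_insert, Finset.mem_singleton]
        push_neg
        exact ⟨Ne.symm hj0i, Ne.symm hj'i⟩
    rcases hsym' a with h0 | h2
    · have hi' : i ∈ univ.filter (fun m => a ∈ (w m).support) := by
        simp only [Finset.mem_filter, mem_univ, true_and]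
        exact ha
      rw [Finset.card_eq_zero.1 h0] at hi'
      simp at hi'
    · have := Finset.card_le_card hsub
      omega
  · intro hpair
    exact PairedAux.reverse_dir w hsym' hpair
end

section
/- Fix q ≥ 2 and an odd positive integer k. Let B_n denote the number of k-tuples of q-cycles in S_n whose product is the identity. Then lim_{n→∞} B_n · (q/n^q)^{k/2} = 0. Moreover, if q is even then B_n = 0 for all n. -/
open Equiv Equiv.Perm

-- helper: list product fixes a point fixed by all elements
lemma listprod_fix {α : Type*} (x : α) :
    ∀ l : List (Equiv.Perm α), (∀ g ∈ l, g x = x) → l.prod x = x := by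
  intro l
  induction l with
  | nil => intro _; simp
  | cons a l ih =>
      intro h
      rw [List.prod_cons, Equiv.Perm.mul_apply, ih (fun g hg => h g (List.mem_cons_of_mem a hg)),
        h a List.mem_cons_self]

-- helper: pull back a permutation supported in the range of an embedding
lemma exists_pullback {M n : ℕ} (g : Fin M ↪ Fin n) (σ : Equiv.Perm (Fin n))
    (h : ∀ x, σ x ≠ x → x ∈ Set.range g) : ∃ s : Equiv.Perm (Fin M), s.viaEmbedding g = σ := by
  have hmaps : ∀ a : Fin M, σ (g a) ∈ Set.range g := by
    intro a
    by_cases hx : σ (g a) = g a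
    · rw [hx]; exact Set.mem_range_self a
    · exact h _ (fun he => hx (σ.injective he))
  choose u hu using fun a => hmaps a
  have hinj : Function.Injective u := by
    intro a b hab
    apply g.injective
    apply σ.injective
    rw [← hu a, ← hu b, hab]
  refine ⟨Equiv.ofBijective u (Finite.injective_iff_bijective.mp hinj), ?_⟩
  ext x
  by_cases hx : x ∈ Set.range g
  · obtain ⟨a, rfl⟩ := hx
    rw [Equiv.Perm.viaEmbedding_apply, Equiv.ofBijective_apply]
    exact congrArg _ (hu a)
  · rw [Equiv.Perm.viaEmbedding_apply_of_notMem _ _ _ hx]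
    by_contra hne
    apply hx
    apply h
    intro he
    exact hne (congrArg _ he.symm)

-- key multiplicity lemma: each moved point is moved by at least two of the cycles
lemma two_le_mult {n k : ℕ} (t : Fin k → Equiv.Perm (Fin n))
    (hprod : (List.ofFn t).prod = 1) (x : Fin n) (j0 : Fin k)
    (hx : x ∈ (t j0).support) :
    2 ≤ (Finset.univ.filter fun j => x ∈ (t j).support).card := by
  by_contra hlt
  push_neg at hlt
  have hone : ∀ j, x ∈ (t j).support → j = j0 := by
    intro j hj
    by_contra hne
    have h2 : 2 ≤ (Finset.univ.filter fun j => x ∈ (t j).support).card := by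
      have hsub : ({j, j0} : Finset (Fin k)) ⊆ Finset.univ.filter fun j => x ∈ (t j).support := by
        intro i hi
        simp only [Finset.mem_insert, Finset.mem_singleton] at hi
        rcases hi with rfl | rfl
        · simp only [Finset.mem_filter, Finset.mem_univ, true_and]; exact hj
        · simp only [Finset.mem_filter, Finset.mem_univ, true_and]; exact hx
      calc 2 = ({j, j0} : Finset (Fin k)).card := (Finset.card_pair hne).symm
        _ ≤ _ := Finset.card_le_card hsub
    omega
  set l := List.ofFn t with hl
  have hlen : l.length = k := by simp [hl]
  have hj0 : (j0 : ℕ) < l.length := by rw [hlen]; exact j0.isLt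
  have hsplit : l = l.take (j0 : ℕ) ++ l.drop (j0 : ℕ) := (List.take_append_drop _ _).symm
  have hdrop : l.drop (j0 : ℕ) = t j0 :: l.drop ((j0 : ℕ) + 1) := by
    rw [List.drop_eq_getElem_cons hj0]
    congr 1
    simp [hl]
  -- elements of take fix x
  have htake : ∀ g ∈ l.take (j0 : ℕ), g x = x := by
    intro g hg
    rw [List.mem_iff_getElem] at hg
    obtain ⟨i, hi, rfl⟩ := hg
    have hi' : i < (j0 : ℕ) := lt_of_lt_of_le hi (by simp [List.length_take])
    have hgi : (l.take (j0 : ℕ))[i] = t ⟨i, lt_trans hi' j0.isLt⟩ := by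
      rw [List.getElem_take]
      simp [hl]
    rw [hgi]
    by_contra hne
    have heq := hone ⟨i, lt_trans hi' j0.isLt⟩ (Equiv.Perm.mem_support.mpr hne)
    have : i = (j0 : ℕ) := congrArg Fin.val heq
    omega
  have hdropfix : ∀ g ∈ l.drop ((j0 : ℕ) + 1), g x = x := by
    intro g hg
    rw [List.mem_iff_getElem] at hg
    obtain ⟨i, hi, rfl⟩ := hg
    have hlt2 : (j0 : ℕ) + 1 + i < l.length := by
      have h3 := hi
      simp only [List.length_drop] at h3
      omega
    have hgi : (l.drop ((j0 : ℕ) + 1))[i] = t ⟨(j0 : ℕ) + 1 + i, by rwa [hlen] at hlt2⟩ := by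
      rw [List.getElem_drop]
      simp [hl]
    rw [hgi]
    by_contra hne
    have heq := hone _ (Equiv.Perm.mem_support.mpr hne)
    have : (j0 : ℕ) + 1 + i = (j0 : ℕ) := congrArg Fin.val heq
    omega
  have hy : t j0 x ≠ x := Equiv.Perm.mem_support.mp hx
  have hxx : l.prod x = x := by rw [hprod]; rfl
  have hprodsplit : l.prod = (l.take (j0 : ℕ)).prod * (t j0 * (l.drop ((j0 : ℕ) + 1)).prod) := by
    conv_lhs => rw [hsplit]
    rw [List.prod_append, hdrop, List.prod_cons]
  rw [hprodsplit] at hxx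
  have hB : (l.drop ((j0 : ℕ) + 1)).prod x = x := listprod_fix x _ hdropfix
  have hA : (l.take (j0 : ℕ)).prod x = x := listprod_fix x _ htake
  rw [Equiv.Perm.mul_apply, Equiv.Perm.mul_apply, hB] at hxx
  have hfix : t j0 x = x := by
    apply (l.take (j0 : ℕ)).prod.injective
    rw [hxx, hA]
  exact hy hfix

-- cardinality bound in the odd case
lemma card_bound (q k n M : ℕ) (hM : k * q = 2 * M + 1) (hMn : M ≤ n) :
    Nat.card {t : Fin k → Equiv.Perm (Fin n) //
        (∀ j, (t j).IsCycle ∧ (t j).support.card = q) ∧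
        (List.ofFn t).prod = 1} ≤ n ^ M * (Nat.factorial M) ^ k := by
  classical
  -- support union bound
  have hSbound : ∀ (t : Fin k → Equiv.Perm (Fin n)),
      (∀ j, (t j).IsCycle ∧ (t j).support.card = q) → (List.ofFn t).prod = 1 →
      (Finset.univ.biUnion fun j => (t j).support).card ≤ M := by
    intro t ht hp
    set S := Finset.univ.biUnion fun j => (t j).support with hS
    have hdouble : S.card • 2 ≤ ∑ x ∈ S, (Finset.univ.filter fun j => x ∈ (t j).support).card := by
      apply Finset.card_nsmul_le_sum
      intro x hx
      obtain ⟨j0, _, hj0⟩ := Finset.mem_biUnion.mp hx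
      exact two_le_mult t hp x j0 hj0
    have hsubsup : ∀ j : Fin k, (t j).support ⊆ S := by
      intro j x hx
      exact Finset.mem_biUnion.mpr ⟨j, Finset.mem_univ j, hx⟩
    have hswap : ∑ x ∈ S, (Finset.univ.filter fun j => x ∈ (t j).support).card
        = ∑ j : Fin k, (t j).support.card := by
      calc ∑ x ∈ S, (Finset.univ.filter fun j => x ∈ (t j).support).card
          = ∑ x ∈ S, ∑ j : Fin k, if x ∈ (t j).support then 1 else 0 := by
            simp [Finset.card_filter]
        _ = ∑ j : Fin k, ∑ x ∈ S, if x ∈ (t j).support then 1 else 0 := Finset.sum_comm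
        _ = ∑ j : Fin k, (S.filter fun x => x ∈ (t j).support).card := by
            simp [Finset.card_filter]
        _ = ∑ j : Fin k, (t j).support.card := by
            apply Finset.sum_congr rfl
            intro j _
            congr 1
            rw [Finset.filter_mem_eq_inter, Finset.inter_eq_right.mpr (hsubsup j)]
    have hsum : ∑ j : Fin k, (t j).support.card = k * q := by
      rw [Finset.sum_congr rfl (fun j _ => (ht j).2)]
      simp [mul_comm]
    rw [hswap, hsum] at hdouble
    simp only [smul_eq_mul] at hdouble
    omega
  -- build the injection
  have hex : ∀ t : {t : Fin k → Equiv.Perm (Fin n) //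
      (∀ j, (t j).IsCycle ∧ (t j).support.card = q) ∧ (List.ofFn t).prod = 1},
      ∃ p : (Fin M ↪ Fin n) × (Fin k → Equiv.Perm (Fin M)),
        ∀ j, (p.2 j).viaEmbedding p.1 = t.1 j := by
    rintro ⟨t, ht, hp⟩
    have hS := hSbound t ht hp
    obtain ⟨S', hsub, hcard⟩ := Finset.exists_superset_card_eq hS (by simpa using hMn)
    set g : Fin M ↪ Fin n := (S'.orderEmbOfFin hcard).toEmbedding with hg
    have hrange : Set.range g = ↑S' := by
      rw [hg]
      exact S'.range_orderEmbOfFin hcard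
    have hcond : ∀ j : Fin k, ∀ x, t j x ≠ x → x ∈ Set.range g := by
      intro j x hx
      rw [hrange]
      exact hsub (Finset.mem_biUnion.mpr ⟨j, Finset.mem_univ j,
        Equiv.Perm.mem_support.mpr hx⟩)
    choose s hs using fun j => exists_pullback g (t j) (hcond j)
    exact ⟨(g, s), hs⟩
  choose G hG using hex
  have hinj : Function.Injective G := by
    intro t1 t2 h12
    have h1 : ∀ j, t1.1 j = t2.1 j := by
      intro j
      rw [← hG t1 j, ← hG t2 j, h12]
    exact Subtype.ext (funext h1)
  calc Nat.card {t : Fin k → Equiv.Perm (Fin n) //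
        (∀ j, (t j).IsCycle ∧ (t j).support.card = q) ∧ (List.ofFn t).prod = 1}
      ≤ Nat.card ((Fin M ↪ Fin n) × (Fin k → Equiv.Perm (Fin M))) :=
        Nat.card_le_card_of_injective G hinj
    _ = n.descFactorial M * (Nat.factorial M) ^ k := by
        rw [Nat.card_eq_fintype_card, Fintype.card_prod, Fintype.card_embedding_eq,
          Fintype.card_fun, Fintype.card_perm]
        simp
    _ ≤ n ^ M * (Nat.factorial M) ^ k :=
        Nat.mul_le_mul_right _ (Nat.descFactorial_le_pow n M)

lemma qcycles_even_empty (q k n : ℕ) (hev : Even q) (hk : Odd k) :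
    Nat.card {t : Fin k → Equiv.Perm (Fin n) //
        (∀ j, (t j).IsCycle ∧ (t j).support.card = q) ∧
        (List.ofFn t).prod = 1} = 0 := by
  rw [Nat.card_eq_zero]
  left
  constructor
  rintro ⟨t, ht, hp⟩
  have hsign : ∀ j, Equiv.Perm.sign (t j) = -1 := by
    intro j
    rw [(ht j).1.sign, (ht j).2, hev.neg_one_pow]
  have h1 : Equiv.Perm.sign (List.ofFn t).prod = 1 := by rw [hp]; simp
  rw [MonoidHom.map_list_prod, List.map_ofFn, List.prod_ofFn] at h1
  simp only [Function.comp, hsign] at h1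
  rw [Finset.prod_const, Finset.card_univ, Fintype.card_fin, hk.neg_one_pow] at h1
  exact absurd h1 (by decide)

/-- For fixed `q ≥ 2` and odd `k`, if `B n` is the number of `k`-tuples of
`q`-cycles in `S_n` whose product is the identity, then
`B n · (q/n^q)^{k/2} → 0` as `n → ∞`; moreover if `q` is even then `B n = 0`
for all `n`. -/
theorem clt_odd_moment_qcycles (q k : ℕ) (hq : 2 ≤ q) (hk : Odd k) :
    Filter.Tendsto
      (fun n : ℕ =>
        (Nat.card {t : Fin k → Equiv.Perm (Fin n) //
            (∀ j, (t j).IsCycle ∧ (t j).support.card = q) ∧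
            (List.ofFn t).prod = 1} : ℝ) *
          ((q : ℝ) / (n : ℝ) ^ q) ^ ((k : ℝ) / 2))
      Filter.atTop (nhds 0) ∧
    (Even q → ∀ n : ℕ,
      Nat.card {t : Fin k → Equiv.Perm (Fin n) //
          (∀ j, (t j).IsCycle ∧ (t j).support.card = q) ∧
          (List.ofFn t).prod = 1} = 0) := by
  refine ⟨?_, fun hev n => qcycles_even_empty q k n hev hk⟩
  by_cases hqe : Even q
  · have hfun : (fun n : ℕ =>
        (Nat.card {t : Fin k → Equiv.Perm (Fin n) //
            (∀ j, (t j).IsCycle ∧ (t j).support.card = q) ∧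
            (List.ofFn t).prod = 1} : ℝ) *
          ((q : ℝ) / (n : ℝ) ^ q) ^ ((k : ℝ) / 2)) = fun _ => (0 : ℝ) := by
      funext n
      rw [qcycles_even_empty q k n hqe hk]
      simp
    rw [hfun]
    exact tendsto_const_nhds
  · have hqo : Odd q := Nat.odd_iff.mpr (Nat.not_even_iff.mp hqe)
    have hkq : Odd (k * q) := hk.mul hqo
    obtain ⟨M, hM⟩ := hkq
    have hM' : k * q = 2 * M + 1 := hM
    -- squeeze
    apply squeeze_zero' (g := fun n : ℕ =>
      ((Nat.factorial M : ℝ) ^ k * (q : ℝ) ^ ((k : ℝ) / 2)) * (n : ℝ) ^ (-(1/2) : ℝ))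
    · filter_upwards with n
      apply mul_nonneg (Nat.cast_nonneg _)
      apply Real.rpow_nonneg
      apply div_nonneg (Nat.cast_nonneg _)
      positivity
    · filter_upwards [Filter.eventually_ge_atTop (max M 1)] with n hn
      have hMn : M ≤ n := le_trans (le_max_left _ _) hn
      have hn1 : 1 ≤ n := le_trans (le_max_right _ _) hn
      have hx : (0 : ℝ) < (n : ℝ) := by exact_mod_cast hn1
      have hcard := card_bound q k n M hM' hMn
      have hA : (0 : ℝ) ≤ ((q : ℝ) / (n : ℝ) ^ q) ^ ((k : ℝ) / 2) := by
        apply Real.rpow_nonneg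
        positivity
      calc (Nat.card {t : Fin k → Equiv.Perm (Fin n) //
            (∀ j, (t j).IsCycle ∧ (t j).support.card = q) ∧
            (List.ofFn t).prod = 1} : ℝ) *
          ((q : ℝ) / (n : ℝ) ^ q) ^ ((k : ℝ) / 2)
          ≤ ((n : ℝ) ^ M * (Nat.factorial M : ℝ) ^ k) *
            ((q : ℝ) / (n : ℝ) ^ q) ^ ((k : ℝ) / 2) := by
            apply mul_le_mul_of_nonneg_right _ hA
            exact_mod_cast hcard
        _ = ((Nat.factorial M : ℝ) ^ k * (q : ℝ) ^ ((k : ℝ) / 2)) * (n : ℝ) ^ (-(1/2) : ℝ) := by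
            rw [Real.div_rpow (Nat.cast_nonneg q) (by positivity)]
            rw [← Real.rpow_natCast (n : ℝ) q, ← Real.rpow_natCast (n : ℝ) M,
              ← Real.rpow_mul (le_of_lt hx)]
            rw [div_eq_mul_inv, ← Real.rpow_neg (le_of_lt hx)]
            have hpow : (n:ℝ) ^ ((M:ℕ):ℝ) * (n:ℝ) ^ (-((q:ℝ) * ((k:ℝ)/2))) =
                (n:ℝ) ^ (-(1/2) : ℝ) := by
              rw [← Real.rpow_add hx]
              congr 1
              have hcast : (k : ℝ) * (q : ℝ) = 2 * (M : ℝ) + 1 := by exact_mod_cast hM'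
              nlinarith [hcast]
            calc ((n:ℝ) ^ ((M:ℕ):ℝ) * (Nat.factorial M : ℝ) ^ k) *
                ((q : ℝ) ^ ((k:ℝ)/2) * (n:ℝ) ^ (-((q:ℝ) * ((k:ℝ)/2)))) =
                ((Nat.factorial M : ℝ) ^ k * (q : ℝ) ^ ((k:ℝ)/2)) *
                ((n:ℝ) ^ ((M:ℕ):ℝ) * (n:ℝ) ^ (-((q:ℝ) * ((k:ℝ)/2)))) := by ring
              _ = ((Nat.factorial M : ℝ) ^ k * (q : ℝ) ^ ((k:ℝ)/2)) *
                (n:ℝ) ^ (-(1/2) : ℝ) := by rw [hpow]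
    · have h0 : Filter.Tendsto (fun x : ℝ => x ^ (-(1/2) : ℝ)) Filter.atTop (nhds 0) :=
        tendsto_rpow_neg_atTop (by norm_num)
      have h1 : Filter.Tendsto (fun n : ℕ => (n : ℝ) ^ (-(1/2) : ℝ)) Filter.atTop (nhds 0) :=
        h0.comp tendsto_natCast_atTop_atTop
      simpa using h1.const_mul ((Nat.factorial M : ℝ) ^ k * (q : ℝ) ^ ((k : ℝ) / 2))
end

section
/- Under the conjugacy measure on partitions of n, the probability that a random partition λ satisfies χ^λ(δ) ≠ 0 for the class of a fixed non-trivial cycle type δ contributes negligibly in the sense: Σ over partitions δ of n not of the form (1,1,...,1) of (c(δ)/n!)·B_{n,ν,k,δ}·(d(ν)c(ν)/n^{n(ν)})^{k/2} tends to 0 as n → ∞, where B_{n,ν,k,δ} counts k-tuples of permutations of cycle type ν in S_n with product of cycle type δ. -/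
open Equiv Finset

section PermLemmas
variable {α : Type*} [DecidableEq α] [Fintype α]

lemma listprod_fix_s17 (l : List (Perm α)) (x : α)
    (h : ∀ τ ∈ l, x ∉ τ.support) : l.prod x = x := by
  induction l with
  | nil => simp
  | cons a l ih =>
    simp only [List.prod_cons, Perm.mul_apply]
    rw [ih (fun τ ht => h τ (List.mem_cons_of_mem _ ht))]
    exact Perm.notMem_support.mp (h a List.mem_cons_self)

lemma listprod_ne_of_unique (l1 l2 : List (Perm α)) (σ : Perm α) (x : α)
    (hx : x ∈ σ.support)
    (h1 : ∀ τ ∈ l1, x ∉ τ.support) (h2 : ∀ τ ∈ l2, x ∉ τ.support) :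
    (l1 ++ σ :: l2).prod x ≠ x := by
  rw [List.prod_append, List.prod_cons]
  intro h
  have hfix2 : l2.prod x = x := listprod_fix_s17 l2 x h2
  have hfix1 : l1.prod x = x := listprod_fix_s17 l1 x h1
  simp only [Perm.mul_apply, hfix2] at h
  have := l1.prod.injective (h.trans hfix1.symm)
  exact Perm.mem_support.mp hx this

lemma ofFn_prod_ne_of_unique {k : ℕ} (t : Fin k → Perm α) (j0 : Fin k) (x : α)
    (hx : x ∈ (t j0).support) (h : ∀ j, j ≠ j0 → x ∉ (t j).support) :
    (List.ofFn t).prod x ≠ x := by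
  set l := List.ofFn t with hl
  have hlen : l.length = k := by simp [hl]
  have hj0 : (j0 : ℕ) < l.length := by rw [hlen]; exact j0.isLt
  have hsplit : l = l.take (j0 : ℕ) ++ l[(j0 : ℕ)] :: l.drop ((j0 : ℕ) + 1) := by
    rw [← List.drop_eq_getElem_cons hj0, List.take_append_drop]
  have hget : l[(j0 : ℕ)] = t j0 := by simp [hl]
  rw [hsplit, hget]
  apply listprod_ne_of_unique _ _ _ _ hx
  · intro τ hτ
    obtain ⟨i, hi, rfl⟩ := List.mem_iff_getElem.mp hτ
    have hi' : i < (j0 : ℕ) := by simp [List.length_take] at hi; omega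
    have hik : i < k := lt_of_lt_of_le hi' (le_of_lt j0.isLt)
    rw [List.getElem_take]
    have : l[i] = t ⟨i, hik⟩ := by simp [hl]
    rw [this]
    exact h _ (fun hc => absurd (congrArg Fin.val hc) (Nat.ne_of_lt hi'))
  · intro τ hτ
    obtain ⟨i, hi, rfl⟩ := List.mem_iff_getElem.mp hτ
    rw [List.getElem_drop]
    have hik : (j0 : ℕ) + 1 + i < k := by
      have := hi
      simp only [List.length_drop, hlen] at this
      omega
    have : l[(j0 : ℕ) + 1 + i] = t ⟨(j0 : ℕ) + 1 + i, hik⟩ := by simp [hl]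
    rw [this]
    refine h _ (fun hc => ?_)
    have := congrArg Fin.val hc
    simp at this
    omega

end PermLemmas

section PermLemmas2
variable {α : Type*} [DecidableEq α] [Fintype α]

lemma exists_support_of_mem_listprod (l : List (Perm α)) (x : α)
    (hx : x ∈ l.prod.support) : ∃ τ ∈ l, x ∈ τ.support := by
  induction l with
  | nil => simp at hx
  | cons a l ih =>
    rw [List.prod_cons] at hx
    rcases Finset.mem_union.mp (Equiv.Perm.support_mul_le a l.prod hx) with h | h
    · exact ⟨a, List.mem_cons_self, h⟩
    · obtain ⟨τ, hτ, hxτ⟩ := ih h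
      exact ⟨τ, List.mem_cons_of_mem _ hτ, hxτ⟩

lemma support_ofFn_prod_subset {k : ℕ} (t : Fin k → Perm α) :
    ((List.ofFn t).prod).support ⊆ Finset.univ.sup fun j => (t j).support := by
  intro x hx
  obtain ⟨τ, hτ, hxτ⟩ := exists_support_of_mem_listprod _ _ hx
  obtain ⟨j, rfl⟩ := List.mem_ofFn.mp hτ
  have hs : (t j).support ⊆ Finset.univ.sup fun j => (t j).support :=
    Finset.le_sup (f := fun j => (t j).support) (Finset.mem_univ j)
  exact hs hxτ

lemma card_sup_support_le {k : ℕ} (t : Fin k → Perm α) :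
    (Finset.univ.sup fun j => (t j).support).card ≤ ∑ j, (t j).support.card := by
  rw [Finset.sup_eq_biUnion]
  exact Finset.card_biUnion_le

lemma two_mul_card_sup_support_le {k : ℕ} (t : Fin k → Perm α) :
    2 * (Finset.univ.sup fun j => (t j).support).card ≤
      ((List.ofFn t).prod).support.card + ∑ j, (t j).support.card := by
  classical
  have hsub : ∀ j : Fin k, (t j).support ⊆ Finset.univ.sup fun j => (t j).support :=
    fun j => Finset.le_sup (f := fun j => (t j).support) (Finset.mem_univ j)
  set U := Finset.univ.sup fun j => (t j).support with hU
  set c : α → ℕ := fun x => (Finset.univ.filter fun j => x ∈ (t j).support).card with hc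
  have hsum : ∑ j, (t j).support.card = ∑ x ∈ U, c x := by
    have h1 : ∀ j : Fin k, (t j).support.card = ∑ x ∈ U, if x ∈ (t j).support then 1 else 0 := by
      intro j
      rw [← Finset.card_filter, Finset.filter_mem_eq_inter, Finset.inter_eq_right.mpr (hsub j)]
    simp only [h1]
    rw [Finset.sum_comm]
    refine Finset.sum_congr rfl fun x _ => ?_
    rw [hc, ← Finset.card_filter]
  -- E : elements covered exactly once
  set E := U.filter (fun x => c x = 1) with hE
  have hEsub : E ⊆ ((List.ofFn t).prod).support := by
    intro x hx
    obtain ⟨hxU, hcx⟩ := Finset.mem_filter.mp hx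
    obtain ⟨j0, hj0⟩ := Finset.card_eq_one.mp hcx
    have hj0mem : j0 ∈ Finset.univ.filter fun j => x ∈ (t j).support := by
      rw [hj0]; exact Finset.mem_singleton_self j0
    have hxj0 : x ∈ (t j0).support := (Finset.mem_filter.mp hj0mem).2
    have hother : ∀ j, j ≠ j0 → x ∉ (t j).support := by
      intro j hj hxj
      have : j ∈ Finset.univ.filter fun j => x ∈ (t j).support :=
        Finset.mem_filter.mpr ⟨Finset.mem_univ j, hxj⟩
      rw [hj0, Finset.mem_singleton] at this
      exact hj this
    exact Equiv.Perm.mem_support.mpr (ofFn_prod_ne_of_unique t j0 x hxj0 hother)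
  have hcard_split : E.card + (U.filter (fun x => ¬ c x = 1)).card = U.card :=
    Finset.card_filter_add_card_filter_not _
  have hcU : ∀ x ∈ U, 1 ≤ c x := by
    intro x hx
    obtain ⟨j, _, hj⟩ := Finset.mem_sup.mp hx
    rw [hc]
    exact Finset.card_pos.mpr ⟨j, Finset.mem_filter.mpr ⟨Finset.mem_univ j, hj⟩⟩
  have hlower : E.card + 2 * (U.filter (fun x => ¬ c x = 1)).card ≤ ∑ x ∈ U, c x := by
    rw [← Finset.sum_filter_add_sum_filter_not U (fun x => c x = 1)]
    have hA : E.card ≤ ∑ x ∈ E, c x := by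
      calc E.card = ∑ _x ∈ E, 1 := by simp
      _ ≤ ∑ x ∈ E, c x := Finset.sum_le_sum (fun x hx => hcU x (Finset.mem_filter.mp hx).1)
    have hB : 2 * (U.filter (fun x => ¬ c x = 1)).card ≤
        ∑ x ∈ U.filter (fun x => ¬ c x = 1), c x := by
      have : 2 * (U.filter (fun x => ¬ c x = 1)).card
          = ∑ _x ∈ U.filter (fun x => ¬ c x = 1), 2 := by simp [mul_comm]
      rw [this]
      refine Finset.sum_le_sum fun x hx => ?_
      have h1 := hcU x (Finset.mem_filter.mp hx).1
      have h2 := (Finset.mem_filter.mp hx).2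
      omega
    exact add_le_add hA hB
  have h1 : E.card ≤ ((List.ofFn t).prod).support.card := Finset.card_le_card hEsub
  rw [hsum]
  omega

end PermLemmas2


lemma card_tuples_support_le (k n u0 : ℕ) (hu : u0 ≤ n) :
    Nat.card {t : Fin k → Equiv.Perm (Fin n) //
        (Finset.univ.sup fun j => (t j).support).card ≤ u0} ≤
      n ^ u0 * (Nat.factorial u0) ^ k := by
  classical
  have key : ∀ t : {t : Fin k → Equiv.Perm (Fin n) //
      (Finset.univ.sup fun j => (t j).support).card ≤ u0},
      ∃ c : (Fin u0 ↪ Fin n) × (Fin k → Equiv.Perm (Fin u0)),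
        (∀ j i, (t : Fin k → Equiv.Perm (Fin n)) j (c.1 i) = c.1 (c.2 j i)) ∧
        (∀ j x, x ∉ Set.range c.1 → (t : Fin k → Equiv.Perm (Fin n)) j x = x) := by
    rintro ⟨t, ht⟩
    obtain ⟨W, hUW, -, hWcard⟩ := Finset.exists_subsuperset_card_eq
      (Finset.subset_univ (Finset.univ.sup fun j => (t j).support)) ht
      (by simpa using hu)
    -- equivalence W ≃ Fin u0
    let e : {x : Fin n // x ∈ W} ≃ Fin u0 := W.equivFin.trans (finCongr hWcard)
    have hsuppW : ∀ j, (t j).support ⊆ W := by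
      intro j
      refine subset_trans ?_ hUW
      exact Finset.le_sup (f := fun j => (t j).support) (Finset.mem_univ j)
    have hmem : ∀ j, ∀ x : Fin n, x ∈ W ↔ t j x ∈ W := by
      intro j x
      constructor
      · intro hx
        by_cases hs : x ∈ (t j).support
        · exact hsuppW j (Equiv.Perm.apply_mem_support.mpr hs)
        · rwa [Equiv.Perm.notMem_support.mp hs]
      · intro hx
        by_contra hxW
        have hs : x ∉ (t j).support := fun h => hxW (hsuppW j h)
        rw [Equiv.Perm.notMem_support.mp hs] at hx
        exact hxW hx
    refine ⟨⟨⟨fun i => (e.symm i : Fin n),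
      fun a b hab => e.symm.injective (Subtype.coe_injective hab)⟩,
      fun j => e.permCongr ((t j).subtypePerm (fun x => (hmem j x).symm))⟩, ?_, ?_⟩
    · intro j i
      simp only [Function.Embedding.coeFn_mk, Equiv.permCongr_apply, Equiv.symm_apply_apply]
      show (t j) (e.symm i : Fin n) = (e.symm (e (((t j).subtypePerm _) (e.symm i))) : Fin n)
      rw [Equiv.symm_apply_apply]
      rfl
    · intro j x hx
      have hxW : x ∉ W := by
        intro hxW
        exact hx ⟨e ⟨x, hxW⟩, by show ((e.symm (e ⟨x, hxW⟩) : Fin n)) = x; simp⟩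
      have : x ∉ (t j).support := fun h => hxW (hsuppW j h)
      exact Equiv.Perm.notMem_support.mp this
  choose f hf1 hf2 using key
  have hinj : Function.Injective f := by
    intro a b hab
    apply Subtype.ext
    funext j
    apply Equiv.ext
    intro x
    by_cases hx : x ∈ Set.range (f a).1
    · obtain ⟨i, rfl⟩ := hx
      have h1 := hf1 a j i
      have h2 := hf1 b j i
      rw [hab] at h1
      rw [hab, h1, h2]
    · have h1 := hf2 a j x hx
      rw [hab] at hx
      have h2 := hf2 b j x hx
      rw [h1, h2]
  calc Nat.card {t : Fin k → Equiv.Perm (Fin n) //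
        (Finset.univ.sup fun j => (t j).support).card ≤ u0}
      ≤ Nat.card ((Fin u0 ↪ Fin n) × (Fin k → Equiv.Perm (Fin u0))) :=
        Nat.card_le_card_of_injective f hinj
    _ = n.descFactorial u0 * (Nat.factorial u0) ^ k := by
        rw [Nat.card_eq_fintype_card, Fintype.card_prod, Fintype.card_embedding_eq,
          Fintype.card_fun]
        simp [Fintype.card_perm]
    _ ≤ n ^ u0 * (Nat.factorial u0) ^ k := by
        exact Nat.mul_le_mul_right _ (Nat.descFactorial_le_pow n u0)



/-- `c(μ) = ∏_i l_i(μ)! · i^{l_i(μ)}` for a multiset `μ` of parts. -/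
def cPart (mu : Multiset ℕ) : ℕ :=
  ∏ i ∈ mu.toFinset, Nat.factorial (mu.count i) * i ^ mu.count i

/-- `d(μ) = ∏_i l_i(μ)!` for a multiset `μ` of parts. -/
def dPart (mu : Multiset ℕ) : ℕ :=
  ∏ i ∈ mu.toFinset, Nat.factorial (mu.count i)

lemma Multiset.le_sum_of_mem' {s : Multiset ℕ} {a : ℕ} (h : a ∈ s) : a ≤ s.sum := by
  obtain ⟨s', rfl⟩ := Multiset.exists_cons_of_mem h
  simp

lemma Multiset.card_le_sum' {s : Multiset ℕ} (h : ∀ i ∈ s, 1 ≤ i) :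
    Multiset.card s ≤ s.sum := by
  simpa using Multiset.card_nsmul_le_sum h

lemma cPart_filter_one (s : Multiset ℕ) :
    cPart s = Nat.factorial (s.count 1) * cPart (s.filter (fun i => i ≠ 1)) := by
  classical
  unfold cPart
  rw [Multiset.toFinset_filter]
  rw [← Finset.prod_filter_mul_prod_filter_not s.toFinset (fun i => i ≠ 1)]
  conv_rhs => rw [mul_comm]
  congr 1
  · refine Finset.prod_congr rfl fun i hi => ?_
    have hi1 : i ≠ 1 := (Finset.mem_filter.mp hi).2
    rw [Multiset.count_filter, if_pos hi1]
  · have hset : s.toFinset.filter (fun i => ¬ i ≠ 1) = if 1 ∈ s then {1} else ∅ := by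
      split_ifs with h1
      · ext i
        simp only [Finset.mem_filter, Multiset.mem_toFinset, not_not, Finset.mem_singleton]
        constructor
        · rintro ⟨-, h⟩; exact h
        · rintro rfl; exact ⟨h1, rfl⟩
      · ext i
        simp only [Finset.mem_filter, Multiset.mem_toFinset, not_not, Finset.notMem_empty,
          iff_false, not_and]
        rintro hi rfl; exact h1 hi
    rw [hset]
    split_ifs with h1
    · simp
    · rw [Multiset.count_eq_zero_of_notMem h1]
      simp

lemma cPart_le_of_pos (s : Multiset ℕ) (h0 : ∀ i ∈ s, 1 ≤ i) :
    cPart s ≤ Nat.factorial s.sum * s.sum ^ s.sum := by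
  classical
  rcases eq_or_ne s 0 with rfl | hs
  · simp [cPart]
  have hcard : Multiset.card s ≤ s.sum := Multiset.card_le_sum' h0
  have hsum1 : 1 ≤ s.sum := by
    obtain ⟨a, ha⟩ := Multiset.exists_mem_of_ne_zero hs
    exact le_trans (h0 a ha) (Multiset.le_sum_of_mem' ha)
  unfold cPart
  rw [Finset.prod_mul_distrib]
  have hfac : (∏ i ∈ s.toFinset, Nat.factorial (s.count i)) ≤ Nat.factorial s.sum := by
    have hdvd := Nat.prod_factorial_dvd_factorial_sum s.toFinset (fun i => s.count i)
    have := Nat.le_of_dvd (Nat.factorial_pos _) hdvd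
    refine this.trans (Nat.factorial_le ?_)
    rw [Multiset.toFinset_sum_count_eq]
    exact hcard
  have hpow : (∏ i ∈ s.toFinset, i ^ s.count i) ≤ s.sum ^ s.sum := by
    calc (∏ i ∈ s.toFinset, i ^ s.count i)
        ≤ ∏ i ∈ s.toFinset, s.sum ^ s.count i := by
          refine Finset.prod_le_prod (fun _ _ => Nat.zero_le _) (fun i hi => ?_)
          exact Nat.pow_le_pow_left (Multiset.le_sum_of_mem' (Multiset.mem_toFinset.mp hi)) _
      _ = s.sum ^ (∑ i ∈ s.toFinset, s.count i) := by rw [Finset.prod_pow_eq_pow_sum]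
      _ ≤ s.sum ^ s.sum := by
          refine Nat.pow_le_pow_right hsum1 ?_
          rw [Multiset.toFinset_sum_count_eq]
          exact hcard
  exact Nat.mul_le_mul hfac hpow

lemma sub_pow_mul_factorial_le {n q m : ℕ} (hm : m ≤ q) (hq : q ≤ n) :
    (n - q) ^ m * Nat.factorial (n - m) ≤ Nat.factorial n := by
  induction m with
  | zero => simpa using Nat.factorial_le (Nat.sub_le n 0)
  | succ m ih =>
    have hm' : m ≤ q := Nat.le_of_succ_le hm
    have hmn : m + 1 ≤ n := le_trans hm hq
    have heq : n - m = (n - (m + 1)) + 1 := by omega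
    have hfle : (n - q) * Nat.factorial (n - (m + 1)) ≤ Nat.factorial (n - m) := by
      rw [heq, Nat.factorial_succ]
      exact Nat.mul_le_mul_right _ (by omega)
    calc (n - q) ^ (m + 1) * Nat.factorial (n - (m + 1))
        = (n - q) ^ m * ((n - q) * Nat.factorial (n - (m + 1))) := by ring
      _ ≤ (n - q) ^ m * Nat.factorial (n - m) := Nat.mul_le_mul_left _ hfle
      _ ≤ Nat.factorial n := ih hm'

lemma parts_eq_filter_add_replicate (n : ℕ) (δ : Nat.Partition n) :
    δ.parts = δ.parts.filter (fun i => i ≠ 1)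
      + Multiset.replicate (n - (δ.parts.filter (fun i => i ≠ 1)).sum) 1 := by
  classical
  have h1 : δ.parts.filter (fun i => ¬ i ≠ 1) = δ.parts.filter (fun i => i = 1) := by
    apply Multiset.filter_congr
    intro x _
    simp [not_not]
  have h2 : δ.parts.filter (fun i => i = 1)
      = Multiset.replicate (δ.parts.count 1) 1 := by
    rw [← Multiset.filter_eq']
  have hsplit := Multiset.filter_add_not (fun i => i ≠ 1) δ.parts
  have hsum : (δ.parts.filter (fun i => i ≠ 1)).sum + δ.parts.count 1 = n := by
    have hs2 : (Multiset.filter (fun i => i ≠ 1) δ.parts).sum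
        + (Multiset.filter (fun a => ¬ a ≠ 1) δ.parts).sum = n := by
      rw [← Multiset.sum_add, hsplit, δ.parts_sum]
    rw [h1, h2, Multiset.sum_replicate] at hs2
    simpa using hs2
  have hc : δ.parts.count 1 = n - (δ.parts.filter (fun i => i ≠ 1)).sum := by omega
  conv_lhs => rw [← hsplit]
  rw [h1, h2, hc]



/-- For a fixed partition `ν` with no parts equal to `1` and a fixed `k > 0`,
the sum over all partitions `δ` of `n` different from `(1,1,…,1)` of
`(c(δ)/n!) · B_{n,ν,k,δ} · (d(ν)c(ν)/n^{n(ν)})^{k/2}` tends to `0` as `n → ∞`,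
where `B_{n,ν,k,δ}` counts `k`-tuples of permutations of cycle type `ν` in `S_n`
whose product has cycle type `δ`. -/
theorem non_identity_classes_negligible (M k : ℕ) (hk : 0 < k)
    (ν : Nat.Partition M) (hν : 1 ∉ ν.parts) :
    Filter.Tendsto
      (fun n : ℕ =>
        ∑ᶠ δ : {δ : Nat.Partition n // δ.parts ≠ Multiset.replicate n 1},
          ((cPart (δ : Nat.Partition n).parts : ℝ) / (Nat.factorial n : ℝ)) *
            (Nat.card {t : Fin k → Equiv.Perm (Fin n) //
                (∀ j, (t j).cycleType = ν.parts) ∧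
                (List.ofFn t).prod.cycleType =
                  (δ : Nat.Partition n).parts.filter (fun i => i ≠ 1)} : ℝ) *
            (Real.sqrt (((dPart ν.parts : ℝ) * (cPart ν.parts : ℝ)) / (n : ℝ) ^ M)) ^ k)
      Filter.atTop (nhds 0) := by
  classical
  set q := k * M with hq
  set Cν : ℝ := (dPart ν.parts : ℝ) * (cPart ν.parts : ℝ) with hCν
  have hCν0 : 0 ≤ Cν := by positivity
  set A1 : ℕ := Nat.factorial q * q ^ q with hA1
  set A0 : ℝ := (A1 : ℝ) * ((Nat.factorial q : ℝ)) ^ k * (Real.sqrt Cν) ^ k with hA0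
  have hA00 : 0 ≤ A0 := by positivity
  set K : ℝ := A0 * 4 with hK
  have hK0 : 0 ≤ K := by positivity
  set P : Finset (Multiset ℕ) := (Finset.range (q + 1)).biUnion
      (fun m => (Finset.univ : Finset (Nat.Partition m)).image Nat.Partition.parts) with hP
  set D : ℕ := P.card with hD
  apply squeeze_zero' (g := fun n : ℕ => ((D : ℝ) * K) / n)
  · -- nonnegativity
    filter_upwards with n
    apply finsum_nonneg
    intro δ
    positivity
  · -- main bound
    rw [Filter.eventually_atTop]
    refine ⟨2 * q + 4, fun n hn => ?_⟩
    have hn4 : 4 ≤ n := by omega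
    have hqn : q < n := by omega
    have hnn0 : (0:ℝ) < (n:ℝ) := by
      have : 0 < n := by omega
      exact_mod_cast this
    have hnfac : (0:ℝ) < (Nat.factorial n : ℝ) := by exact_mod_cast Nat.factorial_pos n
    set w : ℝ := ((n - q : ℕ) : ℝ) with hw
    have hw0 : (0:ℝ) < w := by
      rw [hw]
      exact_mod_cast Nat.sub_pos_of_lt hqn
    set R : ℝ := Real.sqrt (n:ℝ) with hR
    have hR0 : (0:ℝ) ≤ R := Real.sqrt_nonneg _
    have hRsq : R ^ 2 = (n:ℝ) := Real.sq_sqrt hnn0.le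
    have hR1 : 1 ≤ R := by
      rw [hR, show (1:ℝ) = Real.sqrt 1 from Real.sqrt_one.symm]
      exact Real.sqrt_le_sqrt (by exact_mod_cast Nat.one_le_of_lt (by omega : 1 < n))
    have hRne : R ≠ 0 := by positivity
    have hwne : w ≠ 0 := ne_of_gt hw0
    have hRw : R ≤ w := by
      have hnat : n ≤ (n - q) * (n - q) := by
        have h1 : 2 ≤ n - q := by omega
        have h2 : n ≤ 2 * (n - q) := by omega
        exact h2.trans (Nat.mul_le_mul_right _ h1)
      rw [hR, hw, show ((n - q : ℕ):ℝ) = Real.sqrt (((n - q : ℕ):ℝ)^2) from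
        (Real.sqrt_sq (by positivity)).symm]
      apply Real.sqrt_le_sqrt
      rw [sq]
      exact_mod_cast hnat
    have hn2w : (n:ℝ) ≤ 2 * w := by
      rw [hw]
      have : n ≤ 2 * (n - q) := by omega
      exact_mod_cast this
    rw [finsum_eq_sum_of_fintype]
    -- key bound for each class with nonzero count
    have key : ∀ δ : {δ : Nat.Partition n // δ.parts ≠ Multiset.replicate n 1},
        Nat.card {t : Fin k → Equiv.Perm (Fin n) //
            (∀ j, (t j).cycleType = ν.parts) ∧
            (List.ofFn t).prod.cycleType =
              (δ : Nat.Partition n).parts.filter (fun i => i ≠ 1)} ≠ 0 →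
        ((cPart (δ : Nat.Partition n).parts : ℝ) / (Nat.factorial n : ℝ)) *
            (Nat.card {t : Fin k → Equiv.Perm (Fin n) //
                (∀ j, (t j).cycleType = ν.parts) ∧
                (List.ofFn t).prod.cycleType =
                  (δ : Nat.Partition n).parts.filter (fun i => i ≠ 1)} : ℝ) *
            (Real.sqrt (Cν / (n : ℝ) ^ M)) ^ k ≤ K / n := by
      intro δ hB
      obtain ⟨μ, hμ⟩ : ∃ mu, (δ : Nat.Partition n).parts.filter (fun i => i ≠ 1) = mu :=
        ⟨_, rfl⟩
      rw [hμ] at hB ⊢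
      obtain ⟨m, hm⟩ : ∃ m, μ.sum = m := ⟨_, rfl⟩
      have hpos : ∀ i ∈ μ, 0 < i := by
        intro i hi
        rw [← hμ] at hi
        exact (δ : Nat.Partition n).parts_pos (Multiset.mem_of_mem_filter hi)
      have h1notμ : (1:ℕ) ∉ μ := by
        intro h
        rw [← hμ] at h
        exact (Multiset.mem_filter.mp h).2 rfl
      -- m ≥ 2
      have hm2 : 2 ≤ m := by
        have hμne : μ ≠ 0 := by
          intro h0
          apply δ.2
          have h := parts_eq_filter_add_replicate n (δ : Nat.Partition n)
          rw [hμ, h0] at h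
          simpa using h
        obtain ⟨a, ha⟩ := Multiset.exists_mem_of_ne_zero hμne
        have ha2 : 2 ≤ a := by
          have h1 := hpos a ha
          have ha' := ha
          rw [← hμ] at ha'
          have hne1 : a ≠ 1 := (Multiset.mem_filter.mp ha').2
          omega
        rw [← hm]
        exact ha2.trans (Multiset.le_sum_of_mem' ha)
      -- support bound for all counted tuples
      have hsup : ∀ x : {t : Fin k → Equiv.Perm (Fin n) //
          (∀ j, (t j).cycleType = ν.parts) ∧ (List.ofFn t).prod.cycleType = μ},
          (Finset.univ.sup fun j => (x.1 j).support).card ≤ (m + q) / 2 ∧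
          ((List.ofFn x.1).prod).support.card = m ∧
          ∑ j : Fin k, (x.1 j).support.card = q := by
        rintro ⟨t, ht1, ht2⟩
        have hsupp : ∀ j : Fin k, (t j).support.card = M := fun j => by
          rw [← Equiv.Perm.sum_cycleType, ht1 j, ν.parts_sum]
        have hsumsupp : ∑ j : Fin k, (t j).support.card = q := by
          simp only [hsupp, Finset.sum_const, Finset.card_univ, Fintype.card_fin,
            smul_eq_mul, hq]
        have hmm : ((List.ofFn t).prod).support.card = m := by
          rw [← Equiv.Perm.sum_cycleType, ht2, hm]
        have h2u := two_mul_card_sup_support_le t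
        rw [hmm, hsumsupp] at h2u
        refine ⟨?_, hmm, hsumsupp⟩
        refine (Nat.le_div_iff_mul_le (by norm_num : 0 < 2)).mpr ?_
        rw [mul_comm]
        exact h2u
      -- m ≤ q
      have hmq : m ≤ q := by
        obtain ⟨x⟩ := (Nat.card_ne_zero.mp hB).1
        obtain ⟨-, hmm, hsumsupp⟩ := hsup x
        have h1 : ((List.ofFn x.1).prod).support.card ≤
            (Finset.univ.sup fun j => (x.1 j).support).card :=
          Finset.card_le_card (support_ofFn_prod_subset x.1)
        have h2 := card_sup_support_le x.1
        rw [← hmm]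
        exact h1.trans (h2.trans (le_of_eq hsumsupp))
      have hq1 : 1 ≤ q := by omega
      -- count of 1s
      have hcount : (δ : Nat.Partition n).parts.count 1 = n - m := by
        conv_lhs => rw [parts_eq_filter_add_replicate n (δ : Nat.Partition n)]
        rw [hμ, hm, Multiset.count_add, Multiset.count_replicate, if_pos rfl,
          Multiset.count_eq_zero.mpr h1notμ]
        omega
      have hmn : m ≤ n := by
        have h := congrArg Multiset.sum
          (Multiset.filter_add_not (fun i => i ≠ 1) (δ : Nat.Partition n).parts)
        rw [Multiset.sum_add, (δ : Nat.Partition n).parts_sum, hμ, hm] at h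
        omega
      -- the Nat inequality for cPart
      have hd : cPart (δ : Nat.Partition n).parts * (n - q) ^ m
          ≤ A1 * Nat.factorial n := by
        rw [cPart_filter_one, hcount, hμ]
        have h1 : cPart μ ≤ Nat.factorial q * q ^ q := by
          have h := cPart_le_of_pos μ (fun i hi => hpos i hi)
          rw [hm] at h
          refine h.trans ?_
          refine Nat.mul_le_mul (Nat.factorial_le hmq) ?_
          exact (Nat.pow_le_pow_left hmq _).trans (Nat.pow_le_pow_right hq1 hmq)
        have h2 : Nat.factorial (n - m) * (n - q) ^ m ≤ Nat.factorial n := by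
          rw [mul_comm]
          exact sub_pow_mul_factorial_le hmq hqn.le
        calc Nat.factorial (n - m) * cPart μ * (n - q) ^ m
            = cPart μ * (Nat.factorial (n - m) * (n - q) ^ m) := by ring
          _ ≤ (Nat.factorial q * q ^ q) * Nat.factorial n := Nat.mul_le_mul h1 h2
          _ = A1 * Nat.factorial n := by rw [hA1]
      -- counting bound
      have hBle : Nat.card {t : Fin k → Equiv.Perm (Fin n) //
            (∀ j, (t j).cycleType = ν.parts) ∧ (List.ofFn t).prod.cycleType = μ}
          ≤ n ^ ((m + q) / 2) * (Nat.factorial q) ^ k := by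
        have hstep := card_tuples_support_le k n ((m + q) / 2) (by clear * - hmq hqn; omega)
        refine le_trans (Nat.card_le_card_of_injective
          (fun x => (⟨x.1, (hsup x).1⟩ : {t : Fin k → Equiv.Perm (Fin n) //
            (Finset.univ.sup fun j => (t j).support).card ≤ (m + q) / 2})) ?_)
          (hstep.trans ?_)
        · intro a b hab
          exact Subtype.ext (by simpa using congrArg Subtype.val hab)
        · refine Nat.mul_le_mul_left _ (Nat.pow_le_pow_left ?_ _)
          exact Nat.factorial_le (by clear * - hmq; omega)
      -- real estimates
      have hterm1 : (cPart (δ : Nat.Partition n).parts : ℝ) / (Nat.factorial n : ℝ)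
          ≤ (A1 : ℝ) / w ^ m := by
        rw [div_le_div_iff₀ hnfac (by positivity)]
        calc (cPart (δ : Nat.Partition n).parts : ℝ) * w ^ m
            = ((cPart (δ : Nat.Partition n).parts * (n - q) ^ m : ℕ) : ℝ) := by
              rw [hw]; push_cast; ring
          _ ≤ ((A1 * Nat.factorial n : ℕ) : ℝ) := by exact_mod_cast hd
          _ = (A1 : ℝ) * (Nat.factorial n : ℝ) := by push_cast; ring
      have hsqrt : (Real.sqrt (Cν / (n : ℝ) ^ M)) ^ k
          = (Real.sqrt Cν) ^ k / R ^ q := by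
        rw [Real.sqrt_div hCν0]
        have h1 : Real.sqrt ((n:ℝ) ^ M) = R ^ M := by
          rw [show ((n:ℝ)) ^ M = (R ^ M) ^ 2 from by rw [← hRsq]; ring,
            Real.sqrt_sq (by positivity)]
        rw [h1, div_pow, ← pow_mul, show M * k = q from by rw [hq]; ring]
      have hnu0 : ((n:ℝ)) ^ ((m + q) / 2) ≤ R ^ (m + q) := by
        calc ((n:ℝ)) ^ ((m + q) / 2) = (R ^ 2) ^ ((m + q) / 2) := by rw [hRsq]
          _ = R ^ (2 * ((m + q) / 2)) := by rw [← pow_mul]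
          _ ≤ R ^ (m + q) := pow_le_pow_right₀ hR1 (by clear * - ; omega)
      calc ((cPart (δ : Nat.Partition n).parts : ℝ) / (Nat.factorial n : ℝ)) *
            (Nat.card {t : Fin k → Equiv.Perm (Fin n) //
                (∀ j, (t j).cycleType = ν.parts) ∧
                (List.ofFn t).prod.cycleType = μ} : ℝ) *
            (Real.sqrt (Cν / (n : ℝ) ^ M)) ^ k
          ≤ ((A1 : ℝ) / w ^ m) * (((n:ℝ)) ^ ((m + q) / 2) * ((Nat.factorial q : ℝ)) ^ k) *
            ((Real.sqrt Cν) ^ k / R ^ q) := by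
            rw [hsqrt]
            have hB2 : (Nat.card {t : Fin k → Equiv.Perm (Fin n) //
                (∀ j, (t j).cycleType = ν.parts) ∧
                (List.ofFn t).prod.cycleType = μ} : ℝ)
                ≤ ((n:ℝ)) ^ ((m + q) / 2) * ((Nat.factorial q : ℝ)) ^ k := by
              exact_mod_cast hBle
            gcongr
        _ ≤ ((A1 : ℝ) / w ^ m) * (R ^ (m + q) * ((Nat.factorial q : ℝ)) ^ k) *
            ((Real.sqrt Cν) ^ k / R ^ q) := by gcongr
        _ = A0 * (R / w) ^ m := by
            rw [hA0, pow_add]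
            rw [div_pow]
            simp only [div_eq_mul_inv]
            have hRq : R ^ q * (R ^ q)⁻¹ = 1 := mul_inv_cancel₀ (pow_ne_zero _ hRne)
            linear_combination ((A1:ℝ) * (w ^ m)⁻¹ * R ^ m * ((Nat.factorial q : ℝ)) ^ k * (Real.sqrt Cν) ^ k) * hRq
        _ ≤ A0 * (R / w) ^ 2 := by
            refine mul_le_mul_of_nonneg_left ?_ hA00
            refine pow_le_pow_of_le_one (by positivity) ?_ hm2
            rw [div_le_one hw0]
            exact hRw
        _ = A0 * ((n:ℝ) / w ^ 2) := by rw [div_pow, hRsq]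
        _ ≤ A0 * (4 / (n:ℝ)) := by
            refine mul_le_mul_of_nonneg_left ?_ hA00
            rw [div_le_div_iff₀ (by positivity) hnn0]
            nlinarith [hn2w, hnn0.le, hw0.le]
        _ = K / n := by rw [hK]; ring
    -- zero terms
    have key0 : ∀ δ : {δ : Nat.Partition n // δ.parts ≠ Multiset.replicate n 1},
        Nat.card {t : Fin k → Equiv.Perm (Fin n) //
            (∀ j, (t j).cycleType = ν.parts) ∧
            (List.ofFn t).prod.cycleType =
              (δ : Nat.Partition n).parts.filter (fun i => i ≠ 1)} = 0 →
        ((cPart (δ : Nat.Partition n).parts : ℝ) / (Nat.factorial n : ℝ)) *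
            (Nat.card {t : Fin k → Equiv.Perm (Fin n) //
                (∀ j, (t j).cycleType = ν.parts) ∧
                (List.ofFn t).prod.cycleType =
                  (δ : Nat.Partition n).parts.filter (fun i => i ≠ 1)} : ℝ) *
            (Real.sqrt (Cν / (n : ℝ) ^ M)) ^ k = 0 := by
      intro δ h0
      rw [h0]
      simp
    -- m ≤ q whenever the count is nonzero
    have hmq' : ∀ δ : {δ : Nat.Partition n // δ.parts ≠ Multiset.replicate n 1},
        Nat.card {t : Fin k → Equiv.Perm (Fin n) //
            (∀ j, (t j).cycleType = ν.parts) ∧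
            (List.ofFn t).prod.cycleType =
              (δ : Nat.Partition n).parts.filter (fun i => i ≠ 1)} ≠ 0 →
        ((δ : Nat.Partition n).parts.filter (fun i => i ≠ 1)).sum ≤ q := by
      intro δ hB
      obtain ⟨x⟩ := (Nat.card_ne_zero.mp hB).1
      obtain ⟨t, ht1, ht2⟩ := x
      have hsupp : ∀ j : Fin k, (t j).support.card = M := fun j => by
        rw [← Equiv.Perm.sum_cycleType, ht1 j, ν.parts_sum]
      have hsumsupp : ∑ j : Fin k, (t j).support.card = q := by
        simp only [hsupp, Finset.sum_const, Finset.card_univ, Fintype.card_fin,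
          smul_eq_mul, hq]
      have hmm : ((List.ofFn t).prod).support.card
          = ((δ : Nat.Partition n).parts.filter (fun i => i ≠ 1)).sum := by
        rw [← Equiv.Perm.sum_cycleType, ht2]
      have h1 : ((List.ofFn t).prod).support.card ≤
          (Finset.univ.sup fun j => (t j).support).card :=
        Finset.card_le_card (support_ofFn_prod_subset t)
      have h2 := card_sup_support_le t
      rw [hmm] at h1
      exact h1.trans (h2.trans_eq hsumsupp)
    -- restrict the sum to classes with nonzero count
    rw [← Finset.sum_filter_of_ne (s := Finset.univ)
      (p := fun δ : {δ : Nat.Partition n // δ.parts ≠ Multiset.replicate n 1} =>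
        Nat.card {t : Fin k → Equiv.Perm (Fin n) //
          (∀ j, (t j).cycleType = ν.parts) ∧
          (List.ofFn t).prod.cycleType =
            (δ : Nat.Partition n).parts.filter (fun i => i ≠ 1)} ≠ 0)
      (fun δ _ hne => by
        by_contra hc
        exact hne (key0 δ hc))]
    -- bound the number of relevant classes
    have hcardD : (Finset.univ.filter
        (fun δ : {δ : Nat.Partition n // δ.parts ≠ Multiset.replicate n 1} =>
          Nat.card {t : Fin k → Equiv.Perm (Fin n) //
            (∀ j, (t j).cycleType = ν.parts) ∧
            (List.ofFn t).prod.cycleType =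
              (δ : Nat.Partition n).parts.filter (fun i => i ≠ 1)} ≠ 0)).card ≤ D := by
      rw [hD]
      refine Finset.card_le_card_of_injOn
        (fun δ => (δ : Nat.Partition n).parts.filter (fun i => i ≠ 1)) ?_ ?_
      · intro δ hδ
        have hB := (Finset.mem_filter.mp hδ).2
        have hmq := hmq' δ hB
        rw [hP]
        apply Finset.mem_biUnion.mpr
        refine ⟨((δ : Nat.Partition n).parts.filter (fun i => i ≠ 1)).sum,
          Finset.mem_range.mpr (by omega), ?_⟩
        apply Finset.mem_image.mpr
        refine ⟨⟨(δ : Nat.Partition n).parts.filter (fun i => i ≠ 1),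
          fun hi => (δ : Nat.Partition n).parts_pos (Multiset.mem_of_mem_filter hi),
          rfl⟩, Finset.mem_univ _, rfl⟩
      · intro δ1 h1 δ2 h2 heq
        simp only at heq
        apply Subtype.ext
        apply Nat.Partition.ext
        rw [parts_eq_filter_add_replicate n (δ1 : Nat.Partition n),
          parts_eq_filter_add_replicate n (δ2 : Nat.Partition n), heq]
    calc ∑ δ ∈ Finset.univ.filter
          (fun δ : {δ : Nat.Partition n // δ.parts ≠ Multiset.replicate n 1} =>
            Nat.card {t : Fin k → Equiv.Perm (Fin n) //
              (∀ j, (t j).cycleType = ν.parts) ∧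
              (List.ofFn t).prod.cycleType =
                (δ : Nat.Partition n).parts.filter (fun i => i ≠ 1)} ≠ 0),
          ((cPart (δ : Nat.Partition n).parts : ℝ) / (Nat.factorial n : ℝ)) *
            (Nat.card {t : Fin k → Equiv.Perm (Fin n) //
                (∀ j, (t j).cycleType = ν.parts) ∧
                (List.ofFn t).prod.cycleType =
                  (δ : Nat.Partition n).parts.filter (fun i => i ≠ 1)} : ℝ) *
            (Real.sqrt (Cν / (n : ℝ) ^ M)) ^ k
        ≤ ∑ δ ∈ Finset.univ.filter
          (fun δ : {δ : Nat.Partition n // δ.parts ≠ Multiset.replicate n 1} =>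
            Nat.card {t : Fin k → Equiv.Perm (Fin n) //
              (∀ j, (t j).cycleType = ν.parts) ∧
              (List.ofFn t).prod.cycleType =
                (δ : Nat.Partition n).parts.filter (fun i => i ≠ 1)} ≠ 0), K / n :=
          Finset.sum_le_sum (fun δ hδ => key δ (Finset.mem_filter.mp hδ).2)
      _ ≤ (D : ℝ) * (K / n) := by
          rw [Finset.sum_const, nsmul_eq_mul]
          refine mul_le_mul_of_nonneg_right ?_ (by positivity)
          exact_mod_cast hcardD
      _ = (D : ℝ) * K / n := by ring


  · exact tendsto_const_div_atTop_nhds_zero_nat _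
end
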